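/- Let A be an MV-algebra and F a filter of A. Then F is a maximal (proper) filter if and only if the quotient A/F embeds into the MV-algebra [0,1], and in that case the embedding A/F → [0,1] is unique. -/

import Mathlib

/-- An MV-algebra structure on a type `A` (standard axiomatization over
`⊕, ¬, 0`). -/
structure MVAlg (A : Type) where
  oplus : A → A → A
  neg : A → A
  zero : A
  oplus_assoc : ∀ x y z, oplus x (oplus y z) = oplus (oplus x y) z
  oplus_comm : ∀ x y, oplus x y = oplus y x
  oplus_zero : ∀ x, oplus x zero = x
  neg_neg : ∀ x, neg (neg x) = x
  oplus_one : ∀ x, oplus x (neg zero) = neg zero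
  luk : ∀ x y, oplus (neg (oplus (neg x) y)) y = oplus (neg (oplus (neg y) x)) x

namespace MVAlg

variable {A : Type}

def one (M : MVAlg A) : A := M.neg M.zero
def imp (M : MVAlg A) (x y : A) : A := M.oplus (M.neg x) y
def odot (M : MVAlg A) (x y : A) : A := M.neg (M.oplus (M.neg x) (M.neg y))

/-- `m`-fold `⊙`-power. -/
def pow (M : MVAlg A) (x : A) : ℕ → A
  | 0 => M.one
  | m + 1 => M.odot x (M.pow x m)

end MVAlg

/-- A filter of an MV-algebra: a nonempty subset, upward closed (w.r.t. the
order `x ≤ y ↔ x ⇒ y = 1`) and closed under modus ponens. -/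
def IsMVFilter {A : Type} (M : MVAlg A) (F : Set A) : Prop :=
  F.Nonempty ∧ (∀ x y, x ∈ F → M.imp x y = M.one → y ∈ F) ∧
    (∀ x y, x ∈ F → M.imp x y ∈ F → y ∈ F)

/-- A maximal filter: a proper filter maximal among the proper filters. -/
def IsMaximalMVFilter {A : Type} (M : MVAlg A) (F : Set A) : Prop :=
  IsMVFilter M F ∧ F ≠ Set.univ ∧
    ∀ G, IsMVFilter M G → G ≠ Set.univ → F ⊆ G → G = F

/-- An MV-homomorphism from `A` into the standard MV-algebra `[0,1]`. -/
def IsMVHomToI {A : Type} (M : MVAlg A) (f : A → ℝ) : Prop :=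
  (∀ x, f x ∈ Set.Icc (0:ℝ) 1) ∧ f M.zero = 0 ∧
    (∀ x y, f (M.oplus x y) = min 1 (f x + f y)) ∧
    (∀ x, f (M.neg x) = 1 - f x)

/-- `f : A → [0,1]` encodes an embedding of the quotient `A/F` into `[0,1]`:
it is an MV-homomorphism and two elements get the same value exactly when they
are congruent modulo `F`. -/
def IsQuotEmbedding {A : Type} (M : MVAlg A) (F : Set A) (f : A → ℝ) : Prop :=
  IsMVHomToI M f ∧ ∀ x y, (f x = f y ↔ (M.imp x y ∈ F ∧ M.imp y x ∈ F))


namespace MVAlg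

variable {A : Type} (M : MVAlg A)

theorem zero_oplus (x : A) : M.oplus M.zero x = x := by
  rw [M.oplus_comm]; exact M.oplus_zero x

theorem neg_one : M.neg M.one = M.zero := M.neg_neg M.zero

theorem one_oplus (x : A) : M.oplus M.one x = M.one := by
  rw [M.oplus_comm]; exact M.oplus_one x

/-- The natural order of the MV-algebra. -/
def le (x y : A) : Prop := M.oplus (M.neg x) y = M.one

/-- Join. -/
def sup (x y : A) : A := M.oplus (M.neg (M.oplus (M.neg x) y)) y

/-- Meet. -/
def inf (x y : A) : A := M.neg (M.sup (M.neg x) (M.neg y))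

theorem sup_comm (x y : A) : M.sup x y = M.sup y x := M.luk x y

theorem oplus_one' (x : A) : M.oplus x M.one = M.one := M.oplus_one x

theorem neg_oplus_self (x : A) : M.oplus (M.neg x) x = M.one := by
  have h := M.luk M.one x
  rw [M.neg_one, M.zero_oplus, M.oplus_one'] at h
  exact h

theorem oplus_neg_self (x : A) : M.oplus x (M.neg x) = M.one := by
  rw [M.oplus_comm]; exact M.neg_oplus_self x

theorem le_refl (x : A) : M.le x x := M.neg_oplus_self x

theorem le_top (x : A) : M.le x M.one := M.oplus_one (M.neg x)

theorem bot_le (x : A) : M.le M.zero x := M.one_oplus x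

theorem sup_eq_right_of_le {x y : A} (h : M.le x y) : M.sup x y = y := by
  unfold sup; unfold le at h
  rw [h, neg_one, M.zero_oplus]

theorem le_sup_right (x y : A) : M.le y (M.sup x y) := by
  unfold le sup
  rw [M.oplus_comm (M.neg (M.oplus (M.neg x) y)) y, M.oplus_assoc,
    M.neg_oplus_self, M.one_oplus]

theorem le_sup_left (x y : A) : M.le x (M.sup x y) := by
  rw [M.sup_comm]; exact M.le_sup_right y x

theorem le_antisymm {x y : A} (h1 : M.le x y) (h2 : M.le y x) : x = y := by
  have := M.sup_comm x y
  rw [M.sup_eq_right_of_le h1, M.sup_eq_right_of_le h2] at this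
  exact this.symm

theorem le_of_oplus_eq {x u y : A} (h : M.oplus x u = y) : M.le x y := by
  unfold le
  rw [← h, M.oplus_assoc, M.neg_oplus_self, M.one_oplus]

theorem le_oplus_left (x u : A) : M.le x (M.oplus x u) := M.le_of_oplus_eq rfl

theorem odot_neg_eq (x y : A) : M.odot x (M.neg y) = M.neg (M.oplus (M.neg x) y) := by
  unfold odot
  rw [M.neg_neg]

theorem sup_eq_odot (x y : A) : M.sup x y = M.oplus (M.odot x (M.neg y)) y := by
  rw [odot_neg_eq]; rfl

/-- subtraction witness: if `x ≤ y` then `x ⊕ (y ⊙ ¬x) = y`. -/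
theorem oplus_sub_of_le {x y : A} (h : M.le x y) : M.oplus x (M.odot y (M.neg x)) = y := by
  have h2 := M.sup_eq_right_of_le h
  rw [M.sup_comm, M.sup_eq_odot, M.oplus_comm] at h2
  exact h2

theorem le_trans {x y z : A} (h1 : M.le x y) (h2 : M.le y z) : M.le x z := by
  have e1 := M.oplus_sub_of_le h1
  have e2 := M.oplus_sub_of_le h2
  exact M.le_of_oplus_eq (by rw [M.oplus_assoc, e1, e2] :
    M.oplus x (M.oplus (M.odot y (M.neg x)) (M.odot z (M.neg y))) = z)

theorem oplus_le_oplus_right {x y : A} (c : A) (h : M.le x y) :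
    M.le (M.oplus x c) (M.oplus y c) := by
  have e1 := M.oplus_sub_of_le h
  exact M.le_of_oplus_eq (by
    rw [M.oplus_comm x c, ← M.oplus_assoc, e1, M.oplus_comm] :
    M.oplus (M.oplus x c) (M.odot y (M.neg x)) = M.oplus y c)

theorem oplus_le_oplus_left {x y : A} (c : A) (h : M.le x y) :
    M.le (M.oplus c x) (M.oplus c y) := by
  rw [M.oplus_comm c x, M.oplus_comm c y]; exact M.oplus_le_oplus_right c h

theorem neg_le_neg {x y : A} (h : M.le x y) : M.le (M.neg y) (M.neg x) := by
  unfold le at *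
  rw [M.neg_neg, M.oplus_comm]
  exact h

theorem le_of_neg_le_neg {x y : A} (h : M.le (M.neg y) (M.neg x)) : M.le x y := by
  have := M.neg_le_neg h
  rw [M.neg_neg, M.neg_neg] at this
  exact this

theorem neg_inj {x y : A} (h : M.neg x = M.neg y) : x = y := by
  rw [← M.neg_neg x, h, M.neg_neg]

theorem neg_odot (x y : A) : M.neg (M.odot x y) = M.oplus (M.neg x) (M.neg y) :=
  M.neg_neg _

theorem neg_oplus (x y : A) : M.neg (M.oplus x y) = M.odot (M.neg x) (M.neg y) := by
  unfold odot; rw [M.neg_neg, M.neg_neg]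

theorem odot_comm (x y : A) : M.odot x y = M.odot y x := by
  unfold odot; rw [M.oplus_comm]

theorem odot_assoc (x y z : A) : M.odot x (M.odot y z) = M.odot (M.odot x y) z := by
  unfold odot; rw [M.neg_neg, M.neg_neg, M.oplus_assoc]

theorem odot_one (x : A) : M.odot x M.one = x := by
  unfold odot; rw [M.neg_one, M.oplus_zero, M.neg_neg]

theorem one_odot (x : A) : M.odot M.one x = x := by
  rw [M.odot_comm]; exact M.odot_one x

theorem odot_zero (x : A) : M.odot x M.zero = M.zero := by
  unfold odot
  rw [show M.neg M.zero = M.one from rfl, M.oplus_one', M.neg_one]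

theorem zero_odot (x : A) : M.odot M.zero x = M.zero := by
  rw [M.odot_comm]; exact M.odot_zero x

theorem odot_neg_self (x : A) : M.odot x (M.neg x) = M.zero := by
  unfold odot
  rw [M.neg_neg, M.neg_oplus_self, M.neg_one]

theorem residuation {x y z : A} : M.le (M.odot x y) z ↔ M.le x (M.imp y z) := by
  unfold le imp
  rw [M.neg_odot, ← M.oplus_assoc]

theorem odot_le_odot_right {x y : A} (c : A) (h : M.le x y) :
    M.le (M.odot x c) (M.odot y c) :=
  M.neg_le_neg (M.oplus_le_oplus_right (M.neg c) (M.neg_le_neg h))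

theorem odot_le_odot_left {x y : A} (c : A) (h : M.le x y) :
    M.le (M.odot c x) (M.odot c y) := by
  rw [M.odot_comm c x, M.odot_comm c y]; exact M.odot_le_odot_right c h

theorem odot_le_left (x y : A) : M.le (M.odot x y) x := by
  have h := M.odot_le_odot_left x (M.le_top y)
  rw [M.odot_one] at h
  exact h

theorem odot_le_right (x y : A) : M.le (M.odot x y) y := by
  rw [M.odot_comm]; exact M.odot_le_left y x

theorem sup_le {x y z : A} (h1 : M.le x z) (h2 : M.le y z) : M.le (M.sup x y) z := by
  have e := M.oplus_sub_of_le h2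
  rw [M.oplus_comm] at e
  have h4 := M.oplus_le_oplus_right y (M.odot_le_odot_right (M.neg y) h1)
  rw [M.sup_eq_odot, ← e]
  exact h4

theorem inf_comm (x y : A) : M.inf x y = M.inf y x := by
  unfold inf; rw [M.sup_comm]

theorem inf_le_left (x y : A) : M.le (M.inf x y) x := by
  have h := M.neg_le_neg (M.le_sup_left (M.neg x) (M.neg y))
  rw [M.neg_neg] at h
  exact h

theorem inf_le_right (x y : A) : M.le (M.inf x y) y := by
  rw [M.inf_comm]; exact M.inf_le_left y x

theorem le_inf {x y z : A} (h1 : M.le z x) (h2 : M.le z y) : M.le z (M.inf x y) := by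
  have h := M.neg_le_neg (M.sup_le (M.neg_le_neg h1) (M.neg_le_neg h2))
  rw [M.neg_neg] at h
  exact h

theorem inf_eq_left {x y : A} (h : M.le x y) : M.inf x y = x :=
  M.le_antisymm (M.inf_le_left x y) (M.le_inf (M.le_refl x) h)

theorem sup_eq_left_of_le {x y : A} (h : M.le y x) : M.sup x y = x := by
  rw [M.sup_comm]; exact M.sup_eq_right_of_le h

theorem inf_eq (x y : A) : M.inf x y = M.odot y (M.oplus (M.neg y) x) := by
  unfold inf sup odot
  rw [M.neg_neg, M.oplus_comm x (M.neg y), M.oplus_comm (M.neg (M.oplus (M.neg y) x)) (M.neg y)]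

theorem neg_inf (x y : A) : M.neg (M.inf x y) = M.sup (M.neg x) (M.neg y) := by
  unfold inf; rw [M.neg_neg]

theorem neg_sup (x y : A) : M.neg (M.sup x y) = M.inf (M.neg x) (M.neg y) := by
  unfold inf; rw [M.neg_neg, M.neg_neg]

theorem odot_sup (x y z : A) : M.odot x (M.sup y z) = M.sup (M.odot x y) (M.odot x z) := by
  apply M.le_antisymm
  · rw [M.odot_comm]
    apply M.residuation.mpr
    apply M.sup_le
    · exact M.residuation.mp (by rw [M.odot_comm]; exact M.le_sup_left _ _)
    · exact M.residuation.mp (by rw [M.odot_comm]; exact M.le_sup_right _ _)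
  · exact M.sup_le (M.odot_le_odot_left x (M.le_sup_left y z))
      (M.odot_le_odot_left x (M.le_sup_right y z))

theorem oplus_inf (x y z : A) :
    M.oplus x (M.inf y z) = M.inf (M.oplus x y) (M.oplus x z) := by
  apply M.neg_inj
  rw [M.neg_oplus, M.neg_inf, M.odot_sup, M.neg_inf, ← M.neg_oplus, ← M.neg_oplus]

/-- Cancellation: if `u, v ≤ ¬w` then `u ⊕ w = v ⊕ w → u = v`. -/
theorem cancel {u v w : A} (hu : M.le u (M.neg w)) (hv : M.le v (M.neg w))
    (h : M.oplus u w = M.oplus v w) : u = v := by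
  have key : ∀ t, M.le t (M.neg w) → M.odot (M.neg w) (M.oplus w t) = t := by
    intro t ht
    have e1 := M.inf_eq t (M.neg w)
    rw [M.neg_neg] at e1
    rw [← e1]
    exact M.inf_eq_left ht
  have k1 := key u hu
  have k2 := key v hv
  rw [M.oplus_comm u w, M.oplus_comm v w] at h
  rw [← k2, ← h, k1]

/-- `(u ⊕ v) ⊙ e ≤ (u ⊙ e) ⊕ v`. -/
theorem oplus_odot_le (u v e : A) :
    M.le (M.odot (M.oplus u v) e) (M.oplus (M.odot u e) v) := by
  apply M.residuation.mpr
  have h1 : M.imp e (M.oplus (M.odot u e) v) = M.oplus (M.sup u (M.neg e)) v := by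
    unfold imp
    rw [M.sup_eq_odot, M.neg_neg, M.oplus_comm (M.odot u e) (M.neg e), ← M.oplus_assoc]
  rw [h1]
  exact M.oplus_le_oplus_right v (M.le_sup_left u (M.neg e))

theorem inf_sub_sub (x y : A) :
    M.inf (M.odot x (M.neg y)) (M.odot y (M.neg x)) = M.zero := by
  have hI5 : M.odot x (M.neg (M.inf x y)) = M.odot x (M.neg y) := by
    rw [M.neg_inf, M.odot_sup, M.odot_neg_self]
    exact M.sup_eq_right_of_le (M.bot_le _)
  have hy : M.oplus (M.inf x y) (M.odot y (M.neg x)) = y := by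
    have h1 : M.inf x y = M.odot y (M.neg (M.odot y (M.neg x))) := by
      rw [M.inf_eq, M.neg_odot, M.neg_neg]
    rw [h1, ← M.sup_eq_odot, M.sup_comm]
    exact M.sup_eq_right_of_le (M.odot_le_left y (M.neg x))
  have h2 : M.neg y = M.odot (M.neg (M.inf x y)) (M.neg (M.odot y (M.neg x))) := by
    rw [← M.neg_oplus, hy]
  have hd : M.odot (M.odot x (M.neg y)) (M.neg (M.odot y (M.neg x))) = M.odot x (M.neg y) := by
    conv_lhs => rw [← hI5]
    rw [← M.odot_assoc, ← h2]
  have h4 : M.inf (M.odot x (M.neg y)) (M.odot y (M.neg x)) =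
      M.odot (M.odot x (M.neg y))
        (M.inf (M.neg (M.odot x (M.neg y))) (M.neg (M.odot y (M.neg x)))) := by
    have e1 : M.inf (M.neg (M.odot x (M.neg y))) (M.neg (M.odot y (M.neg x))) =
        M.odot (M.neg (M.odot y (M.neg x)))
          (M.oplus (M.odot y (M.neg x)) (M.neg (M.odot x (M.neg y)))) := by
      rw [M.inf_eq, M.neg_neg]
    rw [M.inf_comm, M.inf_eq, e1, M.odot_assoc, hd,
      M.oplus_comm (M.neg (M.odot x (M.neg y))) (M.odot y (M.neg x))]
  apply M.le_antisymm _ (M.bot_le _)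
  rw [h4]
  have h5 := M.odot_le_odot_left (M.odot x (M.neg y))
    (M.inf_le_left (M.neg (M.odot x (M.neg y))) (M.neg (M.odot y (M.neg x))))
  rw [M.odot_neg_self] at h5
  exact h5

theorem prelinear (x y : A) : M.sup (M.imp x y) (M.imp y x) = M.one := by
  have h := congrArg M.neg (M.inf_sub_sub x y)
  rw [M.neg_inf, M.neg_odot, M.neg_neg, M.neg_odot, M.neg_neg] at h
  exact h

end MVAlg

namespace MVAlg

variable {A : Type} (M : MVAlg A) (F : Set A)

theorem imp_self (x : A) : M.imp x x = M.one := M.neg_oplus_self x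

theorem imp_one_left (x : A) : M.imp M.one x = x := by
  unfold imp; rw [M.neg_one, M.zero_oplus]

theorem imp_one_right (x : A) : M.imp x M.one = M.one := M.le_top x

theorem imp_zero (x : A) : M.imp x M.zero = M.neg x := M.oplus_zero (M.neg x)

theorem imp_neg (x y : A) : M.imp (M.neg x) (M.neg y) = M.imp y x := by
  unfold imp; rw [M.neg_neg, M.oplus_comm]

theorem imp_le_imp_right {y z : A} (u : A) (h : M.le y z) :
    M.le (M.imp u y) (M.imp u z) := M.oplus_le_oplus_left (M.neg u) h

theorem odot_imp_self (x y : A) : M.odot x (M.imp x y) = M.inf y x :=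
  (M.inf_eq y x).symm

theorem imp_odot_le_imp (x y z : A) :
    M.le (M.odot (M.imp x y) (M.imp y z)) (M.imp x z) := by
  apply M.residuation.mp
  have e : M.odot (M.odot (M.imp x y) (M.imp y z)) x
      = M.odot (M.imp y z) (M.odot x (M.imp x y)) := by
    rw [M.odot_comm (M.imp x y) (M.imp y z), ← M.odot_assoc, M.odot_comm (M.imp x y) x]
  rw [e, M.odot_imp_self]
  have h1 := M.odot_le_odot_left (M.imp y z) (M.inf_le_left y x)
  have e3 : M.odot (M.imp y z) y = M.inf z y := by
    rw [M.odot_comm]; exact M.odot_imp_self y z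
  rw [e3] at h1
  exact M.le_trans h1 (M.inf_le_left z y)

theorem imp_le_imp_oplus (x x' y : A) :
    M.le (M.imp x x') (M.imp (M.oplus x y) (M.oplus x' y)) := by
  apply M.residuation.mp
  rw [M.odot_comm (M.imp x x') (M.oplus x y)]
  have h1 := M.oplus_odot_le x y (M.imp x x')
  rw [show M.odot x (M.imp x x') = M.inf x' x from M.odot_imp_self x x'] at h1
  exact M.le_trans h1 (M.oplus_le_oplus_right y (M.inf_le_left x' x))

section Filter

variable (hF : IsMVFilter M F)
include hF

theorem mem_of_le {x y : A} (hx : x ∈ F) (h : M.le x y) : y ∈ F :=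
  hF.2.1 x y hx h

theorem one_mem : M.one ∈ F := by
  obtain ⟨x, hx⟩ := hF.1
  exact M.mem_of_le F hF hx (M.le_top x)

theorem mp_mem {x y : A} (hx : x ∈ F) (h : M.imp x y ∈ F) : y ∈ F :=
  hF.2.2 x y hx h

theorem odot_mem {x y : A} (hx : x ∈ F) (hy : y ∈ F) : M.odot x y ∈ F := by
  apply M.mp_mem F hF hy
  apply M.mem_of_le F hF hx
  exact M.residuation.mp (M.le_refl (M.odot x y))

end Filter

/-- Congruence modulo a filter. -/
def con (x y : A) : Prop := M.imp x y ∈ F ∧ M.imp y x ∈ F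

section Con

variable (hF : IsMVFilter M F)
include hF

theorem con_refl (x : A) : M.con F x x := by
  constructor <;> (rw [M.imp_self]; exact M.one_mem F hF)

theorem con_symm {x y : A} (h : M.con F x y) : M.con F y x := ⟨h.2, h.1⟩

theorem imp_mem_trans {x y z : A} (h1 : M.imp x y ∈ F) (h2 : M.imp y z ∈ F) :
    M.imp x z ∈ F :=
  M.mem_of_le F hF (M.odot_mem F hF h1 h2) (M.imp_odot_le_imp x y z)

theorem con_trans {x y z : A} (h1 : M.con F x y) (h2 : M.con F y z) : M.con F x z :=
  ⟨M.imp_mem_trans F hF h1.1 h2.1, M.imp_mem_trans F hF h2.2 h1.2⟩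

theorem con_one_iff (x : A) : M.con F x M.one ↔ x ∈ F := by
  constructor
  · intro h
    have := h.2
    rw [M.imp_one_left] at this
    exact this
  · intro h
    refine ⟨?_, ?_⟩
    · rw [M.imp_one_right]; exact M.one_mem F hF
    · rw [M.imp_one_left]; exact h

theorem con_oplus {x x' y y' : A} (hx : M.con F x x') (hy : M.con F y y') :
    M.con F (M.oplus x y) (M.oplus x' y') := by
  have key : ∀ a a' b : A, M.imp a a' ∈ F → M.imp (M.oplus a b) (M.oplus a' b) ∈ F := by
    intro a a' b h
    exact M.mem_of_le F hF h (M.imp_le_imp_oplus a a' b)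
  have k1 := key x x' y hx.1
  have k2 := key y y' x' hy.1
  rw [M.oplus_comm y x', M.oplus_comm y' x'] at k2
  have k3 := key x' x y hx.2
  have k4 := key y' y x' hy.2
  rw [M.oplus_comm y' x', M.oplus_comm y x'] at k4
  exact ⟨M.imp_mem_trans F hF k1 k2, M.imp_mem_trans F hF k4 k3⟩

theorem con_neg {x y : A} (h : M.con F x y) : M.con F (M.neg x) (M.neg y) := by
  refine ⟨?_, ?_⟩
  · rw [M.imp_neg]; exact h.2
  · rw [M.imp_neg]; exact h.1

theorem con_odot {x x' y y' : A} (hx : M.con F x x') (hy : M.con F y y') :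
    M.con F (M.odot x y) (M.odot x' y') :=
  M.con_neg F hF (M.con_oplus F hF (M.con_neg F hF hx) (M.con_neg F hF hy))

end Con

end MVAlg

namespace MVAlg

variable {A : Type} (M : MVAlg A) (F : Set A)

theorem pow_zero_eq (x : A) : M.pow x 0 = M.one := rfl

theorem pow_succ_eq (x : A) (k : ℕ) : M.pow x (k + 1) = M.odot x (M.pow x k) := rfl

theorem pow_one_eq (x : A) : M.pow x 1 = x := by
  rw [M.pow_succ_eq, M.pow_zero_eq, M.odot_one]

theorem odot_le_odot {a a' b b' : A} (h1 : M.le a a') (h2 : M.le b b') :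
    M.le (M.odot a b) (M.odot a' b') :=
  M.le_trans (M.odot_le_odot_right b h1) (M.odot_le_odot_left a' h2)

theorem odot_odot_perm (p q r s : A) :
    M.odot (M.odot p q) (M.odot r s) = M.odot (M.odot r p) (M.odot s q) := by
  rw [← M.odot_assoc p q (M.odot r s), M.odot_assoc q r s, M.odot_comm q r,
    ← M.odot_assoc r q s, M.odot_comm q s, M.odot_assoc p r (M.odot s q),
    M.odot_comm p r]

theorem neg_le_of_sup_eq_one {u v : A} (h : M.sup u v = M.one) : M.le (M.neg u) v := by
  have h2 : M.le v (M.oplus u v) := M.le_of_oplus_eq (M.oplus_comm v u)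
  have h1 : M.oplus u v = M.one := by
    apply M.le_antisymm (M.le_top _)
    rw [← h]
    exact M.sup_le (M.le_oplus_left u v) h2
  show M.oplus (M.neg (M.neg u)) v = M.one
  rw [M.neg_neg]
  exact h1

theorem sup_pow {a b : A} (h : M.sup a b = M.one) :
    ∀ k, M.sup (M.pow a k) b = M.one := by
  intro k
  induction k with
  | zero => exact M.sup_eq_left_of_le (M.le_top b)
  | succ k ih =>
    have e1 : M.odot (M.sup a b) (M.sup (M.pow a k) b) = M.one := by
      rw [h, ih, M.odot_one]
    have e3 : M.odot (M.sup a b) (M.pow a k) =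
        M.sup (M.odot a (M.pow a k)) (M.odot b (M.pow a k)) := by
      rw [M.odot_comm (M.sup a b) (M.pow a k), M.odot_sup, M.odot_comm (M.pow a k) a,
        M.odot_comm (M.pow a k) b]
    have E : M.one = M.sup (M.sup (M.odot a (M.pow a k)) (M.odot b (M.pow a k)))
        (M.odot (M.sup a b) b) := by
      rw [← e1, M.odot_sup, e3]
    have hs : M.le (M.sup (M.sup (M.odot a (M.pow a k)) (M.odot b (M.pow a k)))
        (M.odot (M.sup a b) b)) (M.sup (M.pow a (k + 1)) b) := by
      apply M.sup_le
      · apply M.sup_le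
        · rw [← M.pow_succ_eq]
          exact M.le_sup_left _ _
        · exact M.le_trans (M.odot_le_left b (M.pow a k)) (M.le_sup_right _ _)
      · exact M.le_trans (M.odot_le_right (M.sup a b) b) (M.le_sup_right _ _)
    rw [← E] at hs
    exact M.le_antisymm (M.le_top _) hs

theorem imp_mp_le (a c y z : A) :
    M.le (M.odot (M.imp a y) (M.imp c (M.imp y z))) (M.imp (M.odot a c) z) := by
  apply M.residuation.mp
  rw [M.odot_odot_perm (M.imp a y) (M.imp c (M.imp y z)) a c]
  have h1 : M.le (M.odot a (M.imp a y)) y := by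
    rw [M.odot_imp_self]; exact M.inf_le_left y a
  have h2 : M.le (M.odot c (M.imp c (M.imp y z))) (M.imp y z) := by
    rw [M.odot_imp_self]; exact M.inf_le_left _ c
  have h3 := M.odot_le_odot h1 h2
  apply M.le_trans h3
  rw [M.odot_imp_self]
  exact M.inf_le_left z y

theorem univ_of_zero_mem (hF : IsMVFilter M F) (hz : M.zero ∈ F) : F = Set.univ := by
  ext y
  simp only [Set.mem_univ, iff_true]
  exact M.mem_of_le F hF hz (M.bot_le y)

theorem exists_neg_pow_mem {F : Set A} (hmax : IsMaximalMVFilter M F) {x : A}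
    (hx : x ∉ F) : ∃ k, M.neg (M.pow x k) ∈ F := by
  have hF := hmax.1
  set G := {y | ∃ k, M.imp (M.pow x k) y ∈ F} with hGdef
  have hFG : F ⊆ G := by
    intro y hy
    exact ⟨0, by rw [M.pow_zero_eq, M.imp_one_left]; exact hy⟩
  have hxG : x ∈ G := ⟨1, by rw [M.pow_one_eq, M.imp_self]; exact M.one_mem F hF⟩
  have hG : IsMVFilter M G := by
    refine ⟨⟨x, hxG⟩, ?_, ?_⟩
    · rintro y z ⟨k, hk⟩ hle
      exact ⟨k, M.mem_of_le F hF hk (M.imp_le_imp_right (M.pow x k) hle)⟩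
    · rintro y z ⟨j, hj⟩ ⟨k, hk⟩
      refine ⟨j + k, ?_⟩
      have hprod := M.odot_mem F hF hj hk
      have hle := M.imp_mp_le (M.pow x j) (M.pow x k) y z
      have hpow : M.odot (M.pow x j) (M.pow x k) = M.pow x (j + k) := by
        clear hj hk hprod hle
        induction j with
        | zero => rw [M.pow_zero_eq, M.one_odot, Nat.zero_add]
        | succ j ihj =>
          rw [M.pow_succ_eq, ← M.odot_assoc, ihj, Nat.succ_add, M.pow_succ_eq]
      rw [hpow] at hle
      exact M.mem_of_le F hF hprod hle
  by_cases hne : G = Set.univ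
  · have : M.zero ∈ G := by rw [hne]; trivial
    obtain ⟨k, hk⟩ := this
    rw [M.imp_zero] at hk
    exact ⟨k, hk⟩
  · exfalso
    have := hmax.2.2 G hG hne hFG
    rw [this] at hxG
    exact hx hxG

theorem prime_of_max {F : Set A} (hmax : IsMaximalMVFilter M F) (x y : A) :
    M.imp x y ∈ F ∨ M.imp y x ∈ F := by
  by_cases h : M.imp x y ∈ F
  · exact Or.inl h
  · right
    obtain ⟨k, hk⟩ := M.exists_neg_pow_mem hmax h
    have h2 := M.sup_pow (M.prelinear x y) k
    exact M.mem_of_le F hmax.1 hk (M.neg_le_of_sup_eq_one h2)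

end MVAlg

namespace MVAlg

variable {A : Type} (M : MVAlg A) (F : Set A)

def conSetoid (hF : IsMVFilter M F) : Setoid A where
  r := M.con F
  iseqv := ⟨M.con_refl F hF, fun h => M.con_symm F hF h, fun h1 h2 => M.con_trans F hF h1 h2⟩

variable (hF : IsMVFilter M F)

def Qt := Quotient (M.conSetoid F hF)

def qmk (a : A) : M.Qt F hF := Quotient.mk (M.conSetoid F hF) a

theorem qmk_surjective : Function.Surjective (M.qmk F hF) := by
  intro u
  obtain ⟨a, rfl⟩ := Quotient.exists_rep u
  exact ⟨a, rfl⟩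

theorem qmk_eq_iff {a b : A} : M.qmk F hF a = M.qmk F hF b ↔ M.con F a b :=
  ⟨fun h => Quotient.exact h, fun h => Quotient.sound h⟩

def qMV : MVAlg (M.Qt F hF) where
  oplus := Quotient.lift₂ (fun a b => M.qmk F hF (M.oplus a b))
    (fun _ _ _ _ ha hb => Quotient.sound (M.con_oplus F hF ha hb))
  neg := Quotient.lift (fun a => M.qmk F hF (M.neg a))
    (fun _ _ ha => Quotient.sound (M.con_neg F hF ha))
  zero := M.qmk F hF M.zero
  oplus_assoc := by
    rintro ⟨x⟩ ⟨y⟩ ⟨z⟩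
    exact congrArg (M.qmk F hF) (M.oplus_assoc x y z)
  oplus_comm := by
    rintro ⟨x⟩ ⟨y⟩
    exact congrArg (M.qmk F hF) (M.oplus_comm x y)
  oplus_zero := by
    rintro ⟨x⟩
    exact congrArg (M.qmk F hF) (M.oplus_zero x)
  neg_neg := by
    rintro ⟨x⟩
    exact congrArg (M.qmk F hF) (M.neg_neg x)
  oplus_one := by
    rintro ⟨x⟩
    exact congrArg (M.qmk F hF) (M.oplus_one x)
  luk := by
    rintro ⟨x⟩ ⟨y⟩
    exact congrArg (M.qmk F hF) (M.luk x y)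

theorem qmk_oplus (a b : A) :
    (M.qMV F hF).oplus (M.qmk F hF a) (M.qmk F hF b) = M.qmk F hF (M.oplus a b) := rfl

theorem qmk_neg (a : A) :
    (M.qMV F hF).neg (M.qmk F hF a) = M.qmk F hF (M.neg a) := rfl

theorem qmk_zero : (M.qMV F hF).zero = M.qmk F hF M.zero := rfl

theorem qmk_one : (M.qMV F hF).one = M.qmk F hF M.one := rfl

theorem qmk_odot (a b : A) :
    (M.qMV F hF).odot (M.qmk F hF a) (M.qmk F hF b) = M.qmk F hF (M.odot a b) := rfl

theorem qmk_pow (a : A) (k : ℕ) :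
    (M.qMV F hF).pow (M.qmk F hF a) k = M.qmk F hF (M.pow a k) := by
  induction k with
  | zero => rfl
  | succ k ih => rw [pow_succ_eq, pow_succ_eq, ih, qmk_odot]

theorem qle_iff {a b : A} :
    (M.qMV F hF).le (M.qmk F hF a) (M.qmk F hF b) ↔ M.imp a b ∈ F := by
  show M.qmk F hF (M.oplus (M.neg a) b) = (M.qMV F hF).one ↔ _
  rw [qmk_one, qmk_eq_iff]
  exact M.con_one_iff F hF (M.imp a b)

theorem qmk_one_iff {a : A} : M.qmk F hF a = (M.qMV F hF).one ↔ a ∈ F := by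
  rw [qmk_one, qmk_eq_iff]
  exact M.con_one_iff F hF a

/-- The quotient by a maximal filter is linearly ordered. -/
theorem qlinear (hmax : IsMaximalMVFilter M F) (u v : M.Qt F hF) :
    (M.qMV F hF).le u v ∨ (M.qMV F hF).le v u := by
  obtain ⟨a, rfl⟩ := M.qmk_surjective F hF u
  obtain ⟨b, rfl⟩ := M.qmk_surjective F hF v
  rcases M.prime_of_max hmax a b with h | h
  · exact Or.inl ((M.qle_iff F hF).mpr h)
  · exact Or.inr ((M.qle_iff F hF).mpr h)

/-- The quotient by a maximal filter is simple. -/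
theorem qsimple (hmax : IsMaximalMVFilter M F) (u : M.Qt F hF)
    (hu : u ≠ (M.qMV F hF).one) : ∃ k, (M.qMV F hF).pow u k = (M.qMV F hF).zero := by
  obtain ⟨a, rfl⟩ := M.qmk_surjective F hF u
  have ha : a ∉ F := fun h => hu ((M.qmk_one_iff F hF).mpr h)
  obtain ⟨k, hk⟩ := M.exists_neg_pow_mem hmax ha
  refine ⟨k, ?_⟩
  rw [qmk_pow, qmk_zero, qmk_eq_iff]
  constructor
  · rw [M.imp_zero]; exact hk
  · show M.oplus (M.neg M.zero) (M.pow a k) ∈ F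
    rw [show M.neg M.zero = M.one from rfl, M.one_oplus]
    exact M.one_mem F hF
/-- In the quotient by a proper filter, `0 ≠ 1`. -/
theorem qzero_ne_one (hproper : F ≠ Set.univ) :
    (M.qMV F hF).zero ≠ (M.qMV F hF).one := by
  intro h
  rw [qmk_zero, qmk_one_iff] at h
  exact hproper (M.univ_of_zero_mem F hF h)

end MVAlg

namespace MVAlg

variable {A : Type} (M : MVAlg A)

theorem le_neg_swap {a b : A} (h : M.le a (M.neg b)) : M.le b (M.neg a) := by
  have h2 := M.neg_le_neg h
  rw [M.neg_neg] at h2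
  exact h2

theorem neg_le_swap {a b : A} (h : M.le (M.neg a) b) : M.le (M.neg b) a := by
  have h2 := M.neg_le_neg h
  rw [M.neg_neg] at h2
  exact h2

theorem odot_eq_zero_iff {x y : A} : M.odot x y = M.zero ↔ M.le x (M.neg y) := by
  constructor
  · intro h
    have h2 : M.le (M.odot x y) M.zero := by rw [h]; exact M.le_refl _
    have h3 := M.residuation.mp h2
    rw [show M.imp y M.zero = M.neg y from M.imp_zero y] at h3
    exact h3
  · intro h
    apply M.le_antisymm _ (M.bot_le _)
    apply M.residuation.mpr
    rw [show M.imp y M.zero = M.neg y from M.imp_zero y]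
    exact h

theorem oplus_eq_one_of_neg_le {a b : A} (h : M.le (M.neg a) b) :
    M.oplus a b = M.one := by
  apply M.le_antisymm (M.le_top _)
  have h2 := M.oplus_le_oplus_left a h
  rw [M.oplus_neg_self] at h2
  exact h2

theorem neg_le_of_oplus_eq_one {a b : A} (h : M.oplus a b = M.one) :
    M.le (M.neg a) b := by
  show M.oplus (M.neg (M.neg a)) b = M.one
  rw [M.neg_neg]
  exact h

theorem le_neg_of_oplus_ne_one (hlin : ∀ x y : A, M.le x y ∨ M.le y x) {a b : A}
    (h : M.oplus a b ≠ M.one) : M.le a (M.neg b) := by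
  rcases hlin a (M.neg b) with h1 | h1
  · exact h1
  · exfalso
    apply h
    apply M.le_antisymm (M.le_top _)
    have h2 := M.oplus_le_oplus_right b h1
    rw [M.neg_oplus_self] at h2
    exact h2

theorem odot_eq_zero_of_oplus_ne_one (hlin : ∀ x y : A, M.le x y ∨ M.le y x)
    {a b : A} (h : M.oplus a b ≠ M.one) : M.odot a b = M.zero :=
  M.odot_eq_zero_iff.mpr (M.le_neg_of_oplus_ne_one hlin h)

/-- Dual cancellation. -/
theorem cancel' {u v w : A} (hu : M.le w u) (hv : M.le w v)
    (h : M.odot u (M.neg w) = M.odot v (M.neg w)) : u = v := by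
  apply M.neg_inj
  apply M.cancel (M.neg_le_neg hu) (M.neg_le_neg hv)
  have h2 := congrArg M.neg h
  rw [M.neg_odot, M.neg_odot, M.neg_neg] at h2
  exact h2

/-- `(b ⊙ c) ⊕ ¬c = b ∨ ¬c`. -/
theorem odot_oplus_neg (b c : A) :
    M.oplus (M.odot b c) (M.neg c) = M.sup b (M.neg c) := by
  rw [M.sup_eq_odot, M.neg_neg]

/-- `(c ⊕ u) ⊙ ¬c = u ∧ ¬c`. -/
theorem oplus_odot_neg (c u : A) :
    M.odot (M.oplus c u) (M.neg c) = M.inf u (M.neg c) := by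
  rw [M.inf_eq u (M.neg c), M.neg_neg, M.odot_comm]

theorem X1 {a b c : A} (h1 : M.le a (M.neg b)) (h2 : M.le (M.neg b) c) :
    M.odot (M.oplus a b) c = M.oplus a (M.odot b c) := by
  have hcb : M.le (M.neg c) b := M.neg_le_swap h2
  have hu : M.le (M.odot (M.oplus a b) c) (M.neg (M.neg c)) := by
    rw [M.neg_neg]; exact M.odot_le_right _ _
  have hv : M.le (M.oplus a (M.odot b c)) (M.neg (M.neg c)) := by
    rw [M.neg_neg]
    have s1 : M.le (M.oplus a (M.odot b c)) (M.oplus (M.neg b) (M.odot b c)) := by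
      rw [M.oplus_comm a (M.odot b c), M.oplus_comm (M.neg b) (M.odot b c)]
      exact M.oplus_le_oplus_left _ h1
    have s2 : M.oplus (M.neg b) (M.odot b c) = M.sup c (M.neg b) := by
      rw [M.oplus_comm, M.odot_comm, M.odot_oplus_neg]
    rw [s2, M.sup_eq_left_of_le h2] at s1
    exact s1
  apply M.cancel hu hv
  have l1 : M.oplus (M.odot (M.oplus a b) c) (M.neg c) = M.oplus a b := by
    rw [M.odot_oplus_neg]
    apply M.sup_eq_left_of_le
    exact M.le_trans hcb (M.le_of_oplus_eq (M.oplus_comm b a))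
  have l2 : M.oplus (M.oplus a (M.odot b c)) (M.neg c) = M.oplus a b := by
    rw [← M.oplus_assoc, M.odot_oplus_neg, M.sup_eq_left_of_le hcb]
  rw [l1, l2]

theorem X2 (hlin : ∀ x y : A, M.le x y ∨ M.le y x) {a b c : A}
    (h1 : M.le a (M.neg b)) (h2 : M.le c (M.neg b)) :
    M.odot (M.oplus a b) c = M.odot a (M.oplus b c) := by
  by_cases hone : M.oplus (M.oplus a b) c = M.one
  case neg =>
    rw [M.odot_eq_zero_of_oplus_ne_one hlin hone,
      M.odot_eq_zero_of_oplus_ne_one hlin (by rw [M.oplus_assoc]; exact hone)]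
  case pos =>
    have hba : M.le b (M.neg a) := M.le_neg_swap h1
    have hu : M.le (M.odot (M.oplus a b) c) (M.neg (M.neg a)) := by
      rw [M.neg_neg]
      have s1 := M.odot_le_odot_left (M.oplus a b) h2
      have s2 : M.odot (M.oplus a b) (M.neg b) = M.inf a (M.neg b) := by
        rw [M.oplus_comm a b, M.oplus_odot_neg]
      rw [s2] at s1
      exact M.le_trans s1 (M.inf_le_left a (M.neg b))
    have hv : M.le (M.odot a (M.oplus b c)) (M.neg (M.neg a)) := by
      rw [M.neg_neg]; exact M.odot_le_left _ _
    apply M.cancel hu hv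
    have l1 : M.oplus (M.odot (M.oplus a b) c) (M.neg a) = M.oplus b c := by
      have e1 : M.oplus (M.neg (M.oplus a b)) b = M.neg a := by
        rw [M.neg_oplus, ← M.sup_eq_odot]
        exact M.sup_eq_left_of_le hba
      rw [← e1, M.oplus_assoc, M.odot_comm, M.odot_oplus_neg,
        M.sup_eq_left_of_le (M.neg_le_of_oplus_eq_one hone), M.oplus_comm c b]
    have l2 : M.oplus (M.odot a (M.oplus b c)) (M.neg a) = M.oplus b c := by
      rw [M.odot_comm, M.odot_oplus_neg]
      apply M.sup_eq_left_of_le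
      apply M.neg_le_of_oplus_eq_one
      rw [M.oplus_assoc]
      exact hone
    rw [l1, l2]

theorem X3 {a b c : A} (h1 : M.le (M.neg a) b) (h2 : M.le b (M.neg c)) :
    M.oplus (M.odot a b) c = M.odot a (M.oplus b c) := by
  have hcb : M.le c (M.neg b) := M.le_neg_swap h2
  have hba : M.le (M.neg b) a := M.neg_le_swap h1
  have hu : M.le (M.oplus (M.odot a b) c) (M.neg (M.neg a)) := by
    rw [M.neg_neg]
    have s1 := M.oplus_le_oplus_left (M.odot a b) hcb
    have s2 : M.oplus (M.odot a b) (M.neg b) = M.sup a (M.neg b) := M.odot_oplus_neg a b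
    rw [s2, M.sup_eq_left_of_le hba] at s1
    exact s1
  have hv : M.le (M.odot a (M.oplus b c)) (M.neg (M.neg a)) := by
    rw [M.neg_neg]; exact M.odot_le_left _ _
  apply M.cancel hu hv
  have l1 : M.oplus (M.oplus (M.odot a b) c) (M.neg a) = M.oplus b c := by
    rw [M.oplus_comm (M.odot a b) c, ← M.oplus_assoc, M.odot_comm a b,
      M.odot_oplus_neg, M.sup_eq_left_of_le h1, M.oplus_comm c b]
  have l2 : M.oplus (M.odot a (M.oplus b c)) (M.neg a) = M.oplus b c := by
    rw [M.odot_comm, M.odot_oplus_neg]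
    exact M.sup_eq_left_of_le (M.le_trans h1 (M.le_oplus_left b c))
  rw [l1, l2]

theorem X4 (hlin : ∀ x y : A, M.le x y ∨ M.le y x) {a b c : A}
    (h1 : M.le (M.neg a) b) (h2 : M.le (M.neg b) c)
    (h3 : M.odot (M.odot a b) c = M.zero) :
    M.oplus (M.odot a b) c = M.oplus a (M.odot b c) := by
  have hba : M.le (M.neg b) a := M.neg_le_swap h1
  have hcb : M.le (M.neg c) b := M.neg_le_swap h2
  have hu : M.le c (M.oplus (M.odot a b) c) := M.le_of_oplus_eq (M.oplus_comm c _)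
  have hv : M.le c (M.oplus a (M.odot b c)) := by
    have s1 : M.le (M.oplus (M.neg b) (M.odot b c)) (M.oplus a (M.odot b c)) :=
      M.oplus_le_oplus_right _ hba
    have s2 : M.oplus (M.neg b) (M.odot b c) = M.sup c (M.neg b) := by
      rw [M.oplus_comm, M.odot_comm, M.odot_oplus_neg]
    rw [s2] at s1
    exact M.le_trans (M.le_sup_left c (M.neg b)) s1
  apply M.cancel' hu hv
  have l1 : M.odot (M.oplus (M.odot a b) c) (M.neg c) = M.odot a b := by
    rw [M.oplus_comm, M.oplus_odot_neg]
    exact M.inf_eq_left (M.odot_eq_zero_iff.mp h3)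
  have l2 : M.odot (M.oplus a (M.odot b c)) (M.neg c) = M.odot a b := by
    have e1 : M.le a (M.neg (M.odot b c)) := by
      apply M.odot_eq_zero_iff.mp
      rw [M.odot_assoc]
      exact h3
    have e2 : M.le (M.neg c) (M.neg (M.odot b c)) := M.neg_le_neg (M.odot_le_right b c)
    rw [M.X2 hlin e1 e2, M.odot_oplus_neg, M.sup_eq_left_of_le hcb]
  rw [l1, l2]

end MVAlg

/-- A point of the Chang enveloping group of a (linearly ordered) MV-algebra. -/
structure CPt {B : Type} (N : MVAlg B) where
  n : ℤ
  a : B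
  ha : a ≠ N.one

namespace MVAlg

variable {B : Type} (N : MVAlg B)

theorem CPt.mk_eq_mk {n1 n2 : ℤ} {a1 a2 : B} {h1 : a1 ≠ N.one} {h2 : a2 ≠ N.one}
    (e1 : n1 = n2) (e2 : a1 = a2) : (⟨n1, a1, h1⟩ : CPt N) = ⟨n2, a2, h2⟩ := by
  cases e1; cases e2; rfl

theorem cpt_ext {x y : CPt N} (e1 : x.n = y.n) (e2 : x.a = y.a) : x = y := by
  obtain ⟨n1, a1, h1⟩ := x
  obtain ⟨n2, a2, h2⟩ := y
  exact CPt.mk_eq_mk N e1 e2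

theorem odot_ne_one {a : B} (ha : a ≠ N.one) (b : B) : N.odot a b ≠ N.one := by
  intro h
  apply ha
  have h2 := N.odot_le_left a b
  rw [h] at h2
  exact N.le_antisymm (N.le_top a) h2

theorem neg_ne_one {a : B} (ha : a ≠ N.zero) : N.neg a ≠ N.one := by
  intro h
  apply ha
  apply N.neg_inj
  rw [h]
  rfl

attribute [local instance] Classical.propDecidable

noncomputable def cadd (x y : CPt N) : CPt N :=
  if h : N.oplus x.a y.a = N.one then
    ⟨x.n + y.n + 1, N.odot x.a y.a, N.odot_ne_one x.ha y.a⟩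
  else ⟨x.n + y.n, N.oplus x.a y.a, h⟩

variable (hzo : N.zero ≠ N.one)

def czero : CPt N := ⟨0, N.zero, hzo⟩

noncomputable def cneg (x : CPt N) : CPt N :=
  if h : x.a = N.zero then ⟨-x.n, N.zero, hzo⟩
  else ⟨-x.n - 1, N.neg x.a, N.neg_ne_one h⟩

theorem cadd_eq_pos {x y : CPt N} (h : N.oplus x.a y.a = N.one) :
    N.cadd x y = ⟨x.n + y.n + 1, N.odot x.a y.a, N.odot_ne_one x.ha y.a⟩ :=
  dif_pos h

theorem cadd_eq_neg {x y : CPt N} (h : N.oplus x.a y.a ≠ N.one) :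
    N.cadd x y = ⟨x.n + y.n, N.oplus x.a y.a, h⟩ :=
  dif_neg h

theorem cadd_mk_pos {n1 n2 : ℤ} {a1 a2 : B} {h1 : a1 ≠ N.one} {h2 : a2 ≠ N.one}
    (h : N.oplus a1 a2 = N.one) :
    N.cadd ⟨n1, a1, h1⟩ ⟨n2, a2, h2⟩ = ⟨n1 + n2 + 1, N.odot a1 a2, N.odot_ne_one h1 a2⟩ :=
  dif_pos h

theorem cadd_mk_neg {n1 n2 : ℤ} {a1 a2 : B} {h1 : a1 ≠ N.one} {h2 : a2 ≠ N.one}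
    (h : N.oplus a1 a2 ≠ N.one) :
    N.cadd ⟨n1, a1, h1⟩ ⟨n2, a2, h2⟩ = ⟨n1 + n2, N.oplus a1 a2, h⟩ :=
  dif_neg h

theorem cadd_comm (x y : CPt N) : N.cadd x y = N.cadd y x := by
  by_cases h : N.oplus x.a y.a = N.one
  · rw [N.cadd_eq_pos h, N.cadd_eq_pos (by rw [N.oplus_comm]; exact h)]
    exact CPt.mk_eq_mk N (by omega) (N.odot_comm x.a y.a)
  · rw [N.cadd_eq_neg h, N.cadd_eq_neg (by rw [N.oplus_comm]; exact h)]
    exact CPt.mk_eq_mk N (by omega) (N.oplus_comm x.a y.a)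

theorem cadd_czero (x : CPt N) : N.cadd x (N.czero hzo) = x := by
  have h : N.oplus x.a (N.czero hzo).a ≠ N.one := by
    show N.oplus x.a N.zero ≠ N.one
    rw [N.oplus_zero]
    exact x.ha
  rw [N.cadd_eq_neg h]
  exact N.cpt_ext (by show x.n + 0 = x.n; omega) (N.oplus_zero x.a)

theorem czero_cadd (x : CPt N) : N.cadd (N.czero hzo) x = x := by
  rw [N.cadd_comm]; exact N.cadd_czero hzo x

theorem cadd_cneg (x : CPt N) : N.cadd x (N.cneg hzo x) = N.czero hzo := by
  obtain ⟨n, a, ha⟩ := x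
  by_cases h : (⟨n, a, ha⟩ : CPt N).a = N.zero
  · have e : N.cneg hzo ⟨n, a, ha⟩ = ⟨-n, N.zero, hzo⟩ := dif_pos h
    rw [e, N.cadd_mk_neg (by rw [N.oplus_zero]; exact ha)]
    exact CPt.mk_eq_mk N (by omega) (by rw [N.oplus_zero]; exact h)
  · have e : N.cneg hzo ⟨n, a, ha⟩ = ⟨-n - 1, N.neg a, N.neg_ne_one h⟩ := dif_neg h
    rw [e, N.cadd_mk_pos (N.oplus_neg_self a)]
    exact CPt.mk_eq_mk N (by omega) (N.odot_neg_self a)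

theorem cneg_cadd (x : CPt N) : N.cadd (N.cneg hzo x) x = N.czero hzo := by
  rw [N.cadd_comm]; exact N.cadd_cneg hzo x

theorem cadd_assoc (hlin : ∀ x y : B, N.le x y ∨ N.le y x) (x y z : CPt N) :
    N.cadd (N.cadd x y) z = N.cadd x (N.cadd y z) := by
  obtain ⟨nx, a, ha⟩ := x
  obtain ⟨ny, b, hb⟩ := y
  obtain ⟨nz, c, hc⟩ := z
  by_cases p : N.oplus a b = N.one
  · rw [N.cadd_mk_pos p]
    by_cases q : N.oplus (N.odot a b) c = N.one
    · rw [N.cadd_mk_pos q]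
      have r : N.oplus b c = N.one := by
        have h1 := N.oplus_le_oplus_right c (N.odot_le_right a b)
        rw [q] at h1
        exact N.le_antisymm (N.le_top _) h1
      rw [N.cadd_mk_pos r]
      have s : N.oplus a (N.odot b c) = N.one := by
        have t1 : N.le (N.neg c) (N.odot a b) :=
          N.neg_le_of_oplus_eq_one (by rw [N.oplus_comm]; exact q)
        have t2 := N.oplus_le_oplus_right (N.neg b) t1
        have t3 : N.oplus (N.odot a b) (N.neg b) = N.sup a (N.neg b) :=
          N.odot_oplus_neg a b
        have t4 : N.sup a (N.neg b) = a :=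
          N.sup_eq_left_of_le (N.neg_le_swap (N.neg_le_of_oplus_eq_one p))
        rw [t3, t4] at t2
        rw [N.oplus_comm]
        apply N.oplus_eq_one_of_neg_le
        rw [N.neg_odot, N.oplus_comm (N.neg b) (N.neg c)]
        exact t2
      rw [N.cadd_mk_pos s]
      exact CPt.mk_eq_mk N (by omega) (N.odot_assoc a b c).symm
    · rw [N.cadd_mk_neg q]
      by_cases r : N.oplus b c = N.one
      · rw [N.cadd_mk_pos r]
        have hab : N.le (N.neg a) b := N.neg_le_of_oplus_eq_one p
        have hbc : N.le (N.neg b) c := N.neg_le_of_oplus_eq_one r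
        have s : N.oplus a (N.odot b c) ≠ N.one := by
          intro hs
          apply q
          have t1 : N.le (N.neg a) (N.odot b c) := N.neg_le_of_oplus_eq_one hs
          have t2 := N.oplus_le_oplus_right (N.neg b) t1
          have t3 : N.oplus (N.odot b c) (N.neg b) = c := by
            rw [N.odot_comm, N.odot_oplus_neg, N.sup_eq_left_of_le hbc]
          rw [t3] at t2
          apply N.oplus_eq_one_of_neg_le
          rw [N.neg_odot]
          exact t2
        rw [N.cadd_mk_neg s]
        have h3 : N.odot (N.odot a b) c = N.zero :=
          N.odot_eq_zero_of_oplus_ne_one hlin q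
        exact CPt.mk_eq_mk N (by omega) (N.X4 hlin hab hbc h3)
      · rw [N.cadd_mk_neg r]
        have s : N.oplus a (N.oplus b c) = N.one := by
          apply N.le_antisymm (N.le_top _)
          have t1 := N.le_oplus_left (N.oplus a b) c
          rw [← N.oplus_assoc] at t1
          rw [p] at t1
          exact t1
        rw [N.cadd_mk_pos s]
        have hab : N.le (N.neg a) b := N.neg_le_of_oplus_eq_one p
        have hbc : N.le b (N.neg c) := N.le_neg_of_oplus_ne_one hlin r
        exact CPt.mk_eq_mk N (by omega) (N.X3 hab hbc)
  · rw [N.cadd_mk_neg p]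
    by_cases q : N.oplus (N.oplus a b) c = N.one
    · rw [N.cadd_mk_pos q]
      by_cases r : N.oplus b c = N.one
      · rw [N.cadd_mk_pos r]
        have hab : N.le a (N.neg b) := N.le_neg_of_oplus_ne_one hlin p
        have hbc : N.le (N.neg b) c := N.neg_le_of_oplus_eq_one r
        have s : N.oplus a (N.odot b c) ≠ N.one := by
          intro hs
          apply p
          have t1 : N.le (N.neg a) (N.odot b c) := N.neg_le_of_oplus_eq_one hs
          have t2 := N.le_trans t1 (N.odot_le_left b c)
          exact N.oplus_eq_one_of_neg_le t2
        rw [N.cadd_mk_neg s]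
        exact CPt.mk_eq_mk N (by omega) (N.X1 hab hbc)
      · rw [N.cadd_mk_neg r]
        have s : N.oplus a (N.oplus b c) = N.one := by
          rw [N.oplus_assoc]
          exact q
        rw [N.cadd_mk_pos s]
        have hab : N.le a (N.neg b) := N.le_neg_of_oplus_ne_one hlin p
        have hcb : N.le c (N.neg b) := N.le_neg_swap (N.le_neg_of_oplus_ne_one hlin r)
        exact CPt.mk_eq_mk N (by omega) (N.X2 hlin hab hcb)
    · rw [N.cadd_mk_neg q]
      have r : N.oplus b c ≠ N.one := by
        intro hr
        apply q
        have t1 : N.le (N.oplus b c) (N.oplus (N.oplus a b) c) :=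
          N.oplus_le_oplus_right c (N.le_of_oplus_eq (N.oplus_comm b a))
        rw [hr] at t1
        exact N.le_antisymm (N.le_top _) t1
      rw [N.cadd_mk_neg r]
      have s : N.oplus a (N.oplus b c) ≠ N.one := by
        rw [N.oplus_assoc]
        exact q
      rw [N.cadd_mk_neg s]
      exact CPt.mk_eq_mk N (by omega) (N.oplus_assoc a b c).symm

end MVAlg

theorem CPt.n_mk {B : Type} {N : MVAlg B} {n : ℤ} {a : B} {h : a ≠ N.one} :
    (⟨n, a, h⟩ : CPt N).n = n := rfl

theorem CPt.a_mk {B : Type} {N : MVAlg B} {n : ℤ} {a : B} {h : a ≠ N.one} :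
    (⟨n, a, h⟩ : CPt N).a = a := rfl

namespace MVAlg

variable {B : Type} (N : MVAlg B)

/-- Lexicographic order on the Chang group. -/
def cle (x y : CPt N) : Prop := x.n < y.n ∨ (x.n = y.n ∧ N.le x.a y.a)

theorem cle_refl (x : CPt N) : N.cle x x := Or.inr ⟨rfl, N.le_refl x.a⟩

theorem cle_trans {x y z : CPt N} (h1 : N.cle x y) (h2 : N.cle y z) : N.cle x z := by
  rcases h1 with h1 | ⟨e1, l1⟩
  · rcases h2 with h2 | ⟨e2, l2⟩
    · exact Or.inl (lt_trans h1 h2)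
    · exact Or.inl (by omega)
  · rcases h2 with h2 | ⟨e2, l2⟩
    · exact Or.inl (by omega)
    · exact Or.inr ⟨e1.trans e2, N.le_trans l1 l2⟩

theorem cle_antisymm {x y : CPt N} (h1 : N.cle x y) (h2 : N.cle y x) : x = y := by
  rcases h1 with h1 | ⟨e1, l1⟩ <;> rcases h2 with h2 | ⟨e2, l2⟩
  · omega
  · omega
  · omega
  · exact N.cpt_ext e1 (N.le_antisymm l1 l2)

theorem cle_total (hlin : ∀ x y : B, N.le x y ∨ N.le y x) (x y : CPt N) :
    N.cle x y ∨ N.cle y x := by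
  rcases lt_trichotomy x.n y.n with h | h | h
  · exact Or.inl (Or.inl h)
  · rcases hlin x.a y.a with h2 | h2
    · exact Or.inl (Or.inr ⟨h, h2⟩)
    · exact Or.inr (Or.inr ⟨h.symm, h2⟩)
  · exact Or.inr (Or.inl h)

theorem cle_n {x y : CPt N} (h : N.cle x y) : x.n ≤ y.n := by
  rcases h with h | ⟨e, _⟩ <;> omega

theorem cadd_n_bounds (x y : CPt N) :
    x.n + y.n ≤ (N.cadd x y).n ∧ (N.cadd x y).n ≤ x.n + y.n + 1 := by
  by_cases h : N.oplus x.a y.a = N.one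
  · rw [N.cadd_eq_pos h]
    simp only [CPt.n_mk]
    omega
  · rw [N.cadd_eq_neg h]
    simp only [CPt.n_mk]
    omega

theorem cadd_le_cadd_left {x y : CPt N} (z : CPt N) (h : N.cle x y) :
    N.cle (N.cadd z x) (N.cadd z y) := by
  rcases h with h | ⟨e, l⟩
  · have b1 := N.cadd_n_bounds z x
    have b2 := N.cadd_n_bounds z y
    by_cases hc : (N.cadd z x).n < (N.cadd z y).n
    · exact Or.inl hc
    · have hx : N.oplus z.a x.a = N.one := by
        by_contra hx
        rw [N.cadd_eq_neg hx] at hc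
        simp only [CPt.n_mk] at hc
        omega
      have hy : N.oplus z.a y.a ≠ N.one := by
        intro hy
        rw [N.cadd_eq_pos hy, N.cadd_eq_pos hx] at hc
        simp only [CPt.n_mk] at hc
        omega
      rw [N.cadd_eq_pos hx] at hc ⊢
      rw [N.cadd_eq_neg hy] at hc ⊢
      simp only [CPt.n_mk] at hc
      refine Or.inr ⟨?_, ?_⟩
      · simp only [CPt.n_mk]; omega
      · simp only [CPt.a_mk]
        exact N.le_trans (N.odot_le_left z.a x.a) (N.le_oplus_left z.a y.a)
  · by_cases hx : N.oplus z.a x.a = N.one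
    · have hy : N.oplus z.a y.a = N.one := by
        apply N.le_antisymm (N.le_top _)
        rw [← hx]
        exact N.oplus_le_oplus_left z.a l
      rw [N.cadd_eq_pos hx, N.cadd_eq_pos hy]
      refine Or.inr ⟨?_, ?_⟩
      · simp only [CPt.n_mk]; omega
      · simp only [CPt.a_mk]; exact N.odot_le_odot_left z.a l
    · by_cases hy : N.oplus z.a y.a = N.one
      · rw [N.cadd_eq_neg hx, N.cadd_eq_pos hy]
        refine Or.inl ?_
        simp only [CPt.n_mk]; omega
      · rw [N.cadd_eq_neg hx, N.cadd_eq_neg hy]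
        refine Or.inr ⟨?_, ?_⟩
        · simp only [CPt.n_mk]; omega
        · simp only [CPt.a_mk]; exact N.oplus_le_oplus_left z.a l

theorem cadd_le_cadd_right {x y : CPt N} (z : CPt N) (h : N.cle x y) :
    N.cle (N.cadd x z) (N.cadd y z) := by
  rw [N.cadd_comm x z, N.cadd_comm y z]
  exact N.cadd_le_cadd_left z h

theorem cadd_le_cadd {x x' y y' : CPt N} (h1 : N.cle x x') (h2 : N.cle y y') :
    N.cle (N.cadd x y) (N.cadd x' y') :=
  N.cle_trans (N.cadd_le_cadd_left x h2) (N.cadd_le_cadd_right y' h1)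

variable (hzo : N.zero ≠ N.one)

theorem cadd_left_cancel {z x y : CPt N} (hzo : N.zero ≠ N.one)
    (hlin : ∀ x y : B, N.le x y ∨ N.le y x)
    (h : N.cadd z x = N.cadd z y) : x = y := by
  have e : ∀ w : CPt N, N.cadd (N.cneg hzo z) (N.cadd z w) = w := by
    intro w
    rw [← N.cadd_assoc hlin, N.cneg_cadd hzo, N.czero_cadd hzo]
  rw [← e x, ← e y, h]

/-- `k`-fold sum. -/
noncomputable def cnsmul (k : ℕ) (x : CPt N) : CPt N :=
  Nat.rec (N.czero hzo) (fun _ ih => N.cadd x ih) k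

theorem cnsmul_zero (x : CPt N) : N.cnsmul hzo 0 x = N.czero hzo := rfl

theorem cnsmul_succ (k : ℕ) (x : CPt N) :
    N.cnsmul hzo (k + 1) x = N.cadd x (N.cnsmul hzo k x) := rfl

def uInt (p : ℤ) : CPt N := ⟨p, N.zero, hzo⟩

theorem uInt_n (p : ℤ) : (N.uInt hzo p).n = p := rfl

theorem uInt_a (p : ℤ) : (N.uInt hzo p).a = N.zero := rfl

theorem cadd_uInt (p q : ℤ) :
    N.cadd (N.uInt hzo p) (N.uInt hzo q) = N.uInt hzo (p + q) := by
  unfold uInt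
  rw [N.cadd_mk_neg (by rw [N.oplus_zero]; exact hzo)]
  exact CPt.mk_eq_mk N rfl (N.oplus_zero N.zero)

theorem uInt_le_iff {p q : ℤ} : N.cle (N.uInt hzo p) (N.uInt hzo q) ↔ p ≤ q := by
  constructor
  · intro h
    rcases h with h | ⟨e, _⟩
    · have h2 : p < q := h
      omega
    · have h2 : p = q := e
      omega
  · intro h
    rcases lt_or_eq_of_le h with h | h
    · exact Or.inl h
    · exact Or.inr ⟨h, N.le_refl _⟩

theorem uInt_n_le_self (x : CPt N) : N.cle (N.uInt hzo x.n) x :=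
  Or.inr ⟨rfl, N.bot_le x.a⟩

theorem le_uInt_succ (x : CPt N) : N.cle x (N.uInt hzo (x.n + 1)) :=
  Or.inl (by show x.n < x.n + 1; omega)

theorem uInt_le_n {p : ℤ} {x : CPt N} (h : N.cle (N.uInt hzo p) x) : p ≤ x.n :=
  N.cle_n h

theorem cnsmul_one (x : CPt N) : N.cnsmul hzo 1 x = x := by
  rw [show (1 : ℕ) = 0 + 1 from rfl, N.cnsmul_succ, N.cnsmul_zero]
  exact N.cadd_czero hzo x

theorem cnsmul_le_cnsmul {x y : CPt N} (k : ℕ) (h : N.cle x y) :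
    N.cle (N.cnsmul hzo k x) (N.cnsmul hzo k y) := by
  induction k with
  | zero => exact N.cle_refl _
  | succ k ih =>
    rw [N.cnsmul_succ, N.cnsmul_succ]
    exact N.cadd_le_cadd h ih

theorem cnsmul_uInt (k : ℕ) (p : ℤ) :
    N.cnsmul hzo k (N.uInt hzo p) = N.uInt hzo (k * p) := by
  induction k with
  | zero =>
    rw [N.cnsmul_zero]
    unfold czero uInt
    exact CPt.mk_eq_mk N (by simp) rfl
  | succ k ih =>
    rw [N.cnsmul_succ, ih, N.cadd_uInt]
    congr 1
    push_cast
    ring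

theorem cadd_cadd_perm (hlin : ∀ x y : B, N.le x y ∨ N.le y x) (p q r s : CPt N) :
    N.cadd (N.cadd p q) (N.cadd r s) = N.cadd (N.cadd p r) (N.cadd q s) := by
  rw [N.cadd_assoc hlin p q (N.cadd r s), ← N.cadd_assoc hlin q r s,
    N.cadd_comm q r, N.cadd_assoc hlin r q s, ← N.cadd_assoc hlin p r (N.cadd q s)]

theorem cnsmul_cadd (hlin : ∀ x y : B, N.le x y ∨ N.le y x) (k : ℕ) (x y : CPt N) :
    N.cnsmul hzo k (N.cadd x y) = N.cadd (N.cnsmul hzo k x) (N.cnsmul hzo k y) := by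
  induction k with
  | zero =>
    rw [N.cnsmul_zero, N.cnsmul_zero, N.cnsmul_zero, N.cadd_czero hzo]
  | succ k ih =>
    rw [N.cnsmul_succ, ih, N.cadd_cadd_perm hlin, N.cnsmul_succ, N.cnsmul_succ]

theorem cnsmul_add (hlin : ∀ x y : B, N.le x y ∨ N.le y x) (k l : ℕ) (x : CPt N) :
    N.cnsmul hzo (k + l) x = N.cadd (N.cnsmul hzo k x) (N.cnsmul hzo l x) := by
  induction k with
  | zero =>
    rw [Nat.zero_add, N.cnsmul_zero, N.czero_cadd hzo]
  | succ k ih =>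
    have e : k + 1 + l = (k + l) + 1 := by omega
    rw [e, N.cnsmul_succ, ih, N.cnsmul_succ, ← N.cadd_assoc hlin]

theorem cnsmul_mul (hlin : ∀ x y : B, N.le x y ∨ N.le y x) (k l : ℕ) (x : CPt N) :
    N.cnsmul hzo (k * l) x = N.cnsmul hzo k (N.cnsmul hzo l x) := by
  induction k with
  | zero =>
    rw [Nat.zero_mul, N.cnsmul_zero, N.cnsmul_zero]
  | succ k ih =>
    have e : (k + 1) * l = l + k * l := by ring
    rw [e, N.cnsmul_add hzo hlin, ih, N.cnsmul_succ]

end MVAlg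

namespace MVAlg

variable {B : Type} (N : MVAlg B) (hzo : N.zero ≠ N.one)

/-- Approximating set for the Hölder functional. -/
def Sset (g : CPt N) : Set ℝ :=
  {q : ℝ | ∃ (p : ℤ) (k : ℕ), q = (p : ℝ) / ((k : ℝ) + 1) ∧
    N.cle (N.uInt hzo p) (N.cnsmul hzo (k + 1) g)}

noncomputable def phi (g : CPt N) : ℝ := sSup (N.Sset hzo g)

theorem Sset_nonempty (g : CPt N) : (N.Sset hzo g).Nonempty := by
  refine ⟨(g.n : ℝ) / ((0 : ℕ) + 1), g.n, 0, rfl, ?_⟩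
  rw [N.cnsmul_one]
  exact N.uInt_n_le_self hzo g

theorem Sset_bdd (g : CPt N) : BddAbove (N.Sset hzo g) := by
  refine ⟨(g.n : ℝ) + 1, ?_⟩
  rintro q ⟨p, k, rfl, hle⟩
  have h1 : N.cle (N.cnsmul hzo (k + 1) g) (N.cnsmul hzo (k + 1) (N.uInt hzo (g.n + 1))) :=
    N.cnsmul_le_cnsmul hzo (k + 1) (N.le_uInt_succ hzo g)
  rw [N.cnsmul_uInt] at h1
  have h2 := (N.uInt_le_iff hzo).mp (N.cle_trans hle h1)
  have hk : (0 : ℝ) < (k : ℝ) + 1 := by positivity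
  rw [div_le_iff₀ hk]
  calc (p : ℝ) ≤ ((k + 1 : ℕ) : ℤ) * (g.n + 1) := by exact_mod_cast h2
    _ = ((g.n : ℝ) + 1) * ((k : ℝ) + 1) := by push_cast; ring

theorem le_phi {g : CPt N} {p : ℤ} {k : ℕ}
    (h : N.cle (N.uInt hzo p) (N.cnsmul hzo (k + 1) g)) :
    (p : ℝ) / ((k : ℝ) + 1) ≤ N.phi hzo g :=
  le_csSup (N.Sset_bdd hzo g) ⟨p, k, rfl, h⟩

theorem phi_le {g : CPt N} {c : ℝ}
    (h : ∀ (p : ℤ) (k : ℕ), N.cle (N.uInt hzo p) (N.cnsmul hzo (k + 1) g) →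
      (p : ℝ) / ((k : ℝ) + 1) ≤ c) :
    N.phi hzo g ≤ c := by
  apply csSup_le (N.Sset_nonempty hzo g)
  rintro q ⟨p, k, rfl, hle⟩
  exact h p k hle

theorem phi_mono {g h : CPt N} (hle : N.cle g h) : N.phi hzo g ≤ N.phi hzo h := by
  apply N.phi_le hzo
  intro p k h1
  exact N.le_phi hzo (N.cle_trans h1 (N.cnsmul_le_cnsmul hzo (k + 1) hle))

theorem cnsmul_czero (k : ℕ) : N.cnsmul hzo k (N.czero hzo) = N.czero hzo := by
  induction k with
  | zero => rfl
  | succ k ih => rw [N.cnsmul_succ, ih, N.cadd_czero]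

theorem phi_czero : N.phi hzo (N.czero hzo) = 0 := by
  apply _root_.le_antisymm
  · apply N.phi_le hzo
    intro p k h1
    rw [N.cnsmul_czero] at h1
    have h2 : N.cle (N.uInt hzo p) (N.uInt hzo 0) := h1
    have h3 := (N.uInt_le_iff hzo).mp h2
    exact div_nonpos_iff.mpr (Or.inr ⟨by exact_mod_cast h3, by positivity⟩)
  · have := N.le_phi hzo (p := 0) (k := 0) (g := N.czero hzo) ?_
    · simpa using this
    · rw [N.cnsmul_czero]
      exact N.cle_refl _

theorem phi_uone : N.phi hzo (N.uInt hzo 1) = 1 := by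
  apply _root_.le_antisymm
  · apply N.phi_le hzo
    intro p k h1
    rw [N.cnsmul_uInt] at h1
    have h2 := (N.uInt_le_iff hzo).mp h1
    have hk : (0 : ℝ) < (k : ℝ) + 1 := by positivity
    rw [div_le_one hk]
    calc (p : ℝ) ≤ ((k + 1 : ℕ) : ℤ) * 1 := by exact_mod_cast h2
      _ = (k : ℝ) + 1 := by push_cast; ring
  · have := N.le_phi hzo (p := 1) (k := 0) (g := N.uInt hzo 1) ?_
    · simpa using this
    · rw [N.cnsmul_one]
      exact N.cle_refl _

theorem phi_cadd (hlin : ∀ x y : B, N.le x y ∨ N.le y x) (g h : CPt N) :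
    N.phi hzo (N.cadd g h) = N.phi hzo g + N.phi hzo h := by
  have Hup : ∀ q1 ∈ N.Sset hzo g, ∀ q2 ∈ N.Sset hzo h,
      q1 + q2 ≤ N.phi hzo (N.cadd g h) := by
    rintro q1 ⟨p1, k1, rfl, h1⟩ q2 ⟨p2, k2, rfl, h2⟩
    set K : ℕ := k1 * k2 + k1 + k2 with hK
    have eK : K + 1 = (k2 + 1) * (k1 + 1) := by rw [hK]; ring
    set pp : ℤ := p1 * (k2 + 1) + p2 * (k1 + 1) with hpp
    have hle : N.cle (N.uInt hzo pp) (N.cnsmul hzo (K + 1) (N.cadd g h)) := by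
      rw [N.cnsmul_cadd hzo hlin, eK]
      have c1 : N.cle (N.uInt hzo (((k2 : ℤ) + 1) * p1))
          (N.cnsmul hzo ((k2 + 1) * (k1 + 1)) g) := by
        rw [N.cnsmul_mul hzo hlin]
        have := N.cnsmul_le_cnsmul hzo (k2 + 1) h1
        rw [N.cnsmul_uInt] at this
        have ecast : ((k2 + 1 : ℕ) : ℤ) * p1 = ((k2 : ℤ) + 1) * p1 := by push_cast; ring
        rw [ecast] at this
        exact this
      have c2 : N.cle (N.uInt hzo (((k1 : ℤ) + 1) * p2))
          (N.cnsmul hzo ((k2 + 1) * (k1 + 1)) h) := by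
        have e2 : (k2 + 1) * (k1 + 1) = (k1 + 1) * (k2 + 1) := by ring
        rw [e2, N.cnsmul_mul hzo hlin]
        have := N.cnsmul_le_cnsmul hzo (k1 + 1) h2
        rw [N.cnsmul_uInt] at this
        have ecast : ((k1 + 1 : ℕ) : ℤ) * p2 = ((k1 : ℤ) + 1) * p2 := by push_cast; ring
        rw [ecast] at this
        exact this
      have c3 := N.cadd_le_cadd c1 c2
      rw [N.cadd_uInt] at c3
      have epp : pp = ((k2 : ℤ) + 1) * p1 + ((k1 : ℤ) + 1) * p2 := by rw [hpp]; ring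
      rw [epp]
      exact c3
    have := N.le_phi hzo hle
    have ereal : (pp : ℝ) / ((K : ℝ) + 1) =
        (p1 : ℝ) / ((k1 : ℝ) + 1) + (p2 : ℝ) / ((k2 : ℝ) + 1) := by
      have hk1 : ((k1 : ℝ) + 1) ≠ 0 := by positivity
      have hk2 : ((k2 : ℝ) + 1) ≠ 0 := by positivity
      have hKr : ((K : ℝ) + 1) = ((k1 : ℝ) + 1) * ((k2 : ℝ) + 1) := by
        rw [hK]; push_cast; ring
      rw [hKr, hpp]
      push_cast
      rw [div_add_div _ _ hk1 hk2, div_eq_div_iff (by positivity) (by positivity)]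
      ring
    rw [ereal] at this
    exact this
  have Hub : N.phi hzo (N.cadd g h) ≤ N.phi hzo g + N.phi hzo h := by
    apply N.phi_le hzo
    intro p k hle
    -- for every m, q ≤ φg + φh + 1/(m+1)
    have key : ∀ m : ℕ, (p : ℝ) / ((k : ℝ) + 1) ≤
        N.phi hzo g + N.phi hzo h + 1 / ((m : ℝ) + 1) := by
      intro m
      set D : ℕ := (m + 1) * (k + 1) with hD
      have hD1 : D = (m * k + m + k) + 1 := by rw [hD]; ring
      set ng : ℤ := (N.cnsmul hzo D g).n with hng
      set nh : ℤ := (N.cnsmul hzo D h).n with hnh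
      have cg : (ng : ℝ) / (((m * k + m + k : ℕ) : ℝ) + 1) ≤ N.phi hzo g := by
        apply N.le_phi hzo
        rw [← hD1, hng]
        exact N.uInt_n_le_self hzo _
      have ch : (nh : ℝ) / (((m * k + m + k : ℕ) : ℝ) + 1) ≤ N.phi hzo h := by
        apply N.le_phi hzo
        rw [← hD1, hnh]
        exact N.uInt_n_le_self hzo _
      have c2 : N.cle (N.uInt hzo (((m : ℤ) + 1) * p)) (N.cnsmul hzo D (N.cadd g h)) := by
        rw [hD, N.cnsmul_mul hzo hlin]
        have := N.cnsmul_le_cnsmul hzo (m + 1) hle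
        rw [N.cnsmul_uInt] at this
        have ecast : ((m + 1 : ℕ) : ℤ) * p = ((m : ℤ) + 1) * p := by push_cast; ring
        rw [ecast] at this
        exact this
      have c3 : N.cnsmul hzo D (N.cadd g h) =
          N.cadd (N.cnsmul hzo D g) (N.cnsmul hzo D h) := N.cnsmul_cadd hzo hlin D g h
      have c4 := N.cadd_n_bounds (N.cnsmul hzo D g) (N.cnsmul hzo D h)
      have c5 : ((m : ℤ) + 1) * p ≤ ng + nh + 1 := by
        have c2' : N.cle (N.uInt hzo (((m : ℤ) + 1) * p))
            (N.cadd (N.cnsmul hzo D g) (N.cnsmul hzo D h)) := by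
          rw [← c3]; exact c2
        have c6 := N.uInt_le_n hzo c2'
        rw [← hng, ← hnh] at c4
        omega
      -- real arithmetic
      have hmr : (0 : ℝ) < (m : ℝ) + 1 := by positivity
      have hkr : (0 : ℝ) < (k : ℝ) + 1 := by positivity
      have hDr : ((m * k + m + k : ℕ) : ℝ) + 1 = ((m : ℝ) + 1) * ((k : ℝ) + 1) := by
        push_cast; ring
      have c6 : ((m : ℝ) + 1) * p ≤ (ng : ℝ) + (nh : ℝ) + 1 := by exact_mod_cast c5
      rw [hDr] at cg ch
      have expand : (p : ℝ) / ((k : ℝ) + 1) ≤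
          (ng : ℝ) / (((m : ℝ) + 1) * ((k : ℝ) + 1)) +
          (nh : ℝ) / (((m : ℝ) + 1) * ((k : ℝ) + 1)) +
          1 / (((m : ℝ) + 1) * ((k : ℝ) + 1)) := by
        rw [← add_div, ← add_div]
        rw [div_le_div_iff₀ hkr (by positivity)]
        calc (p : ℝ) * (((m : ℝ) + 1) * ((k : ℝ) + 1)) =
            (((m : ℝ) + 1) * p) * ((k : ℝ) + 1) := by ring
          _ ≤ ((ng : ℝ) + (nh : ℝ) + 1) * ((k : ℝ) + 1) := by
            apply mul_le_mul_of_nonneg_right c6 (le_of_lt hkr)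
      have last : 1 / (((m : ℝ) + 1) * ((k : ℝ) + 1)) ≤ 1 / ((m : ℝ) + 1) := by
        have hk0 : (0 : ℝ) ≤ (k : ℝ) := Nat.cast_nonneg k
        have h2 : ((m : ℝ) + 1) ≤ ((m : ℝ) + 1) * ((k : ℝ) + 1) := by nlinarith
        exact one_div_le_one_div_of_le hmr h2
      calc (p : ℝ) / ((k : ℝ) + 1) ≤ _ := expand
        _ ≤ N.phi hzo g + N.phi hzo h + 1 / ((m : ℝ) + 1) := by
          have := add_le_add (add_le_add cg ch) last
          linarith
    -- pass to the limit
    apply le_of_forall_pos_le_add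
    intro ε hε
    obtain ⟨m, hm⟩ := exists_nat_one_div_lt hε
    have := key m
    have h2 : 1 / ((m : ℝ) + 1) ≤ ε := le_of_lt hm
    linarith
  apply _root_.le_antisymm Hub
  -- lower bound via Hup
  have ne1 := N.Sset_nonempty hzo g
  have ne2 := N.Sset_nonempty hzo h
  have step1 : N.phi hzo g ≤ N.phi hzo (N.cadd g h) - N.phi hzo h := by
    apply csSup_le ne1
    intro q1 hq1
    have step2 : N.phi hzo h ≤ N.phi hzo (N.cadd g h) - q1 := by
      apply csSup_le ne2
      intro q2 hq2
      have := Hup q1 hq1 q2 hq2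
      linarith
    linarith
  linarith

end MVAlg

namespace MVAlg

variable {B : Type} (N : MVAlg B) (hzo : N.zero ≠ N.one)

attribute [local instance] Classical.propDecidable

theorem phi_cneg (hlin : ∀ x y : B, N.le x y ∨ N.le y x) (g : CPt N) :
    N.phi hzo (N.cneg hzo g) = -N.phi hzo g := by
  have h1 := N.phi_cadd hzo hlin g (N.cneg hzo g)
  rw [N.cadd_cneg hzo, N.phi_czero hzo] at h1
  linarith

theorem cnsmul_pos_cases {a : B} (ha : a ≠ N.one) (j : ℕ) :
    N.cle (N.uInt hzo 1) (N.cnsmul hzo (j + 1) ⟨0, a, ha⟩) ∨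
    ((N.cnsmul hzo (j + 1) ⟨0, a, ha⟩).n = 0 ∧
      (N.cnsmul hzo (j + 1) ⟨0, a, ha⟩).a = N.neg (N.pow (N.neg a) (j + 1))) := by
  have h0g : N.cle (N.czero hzo) (⟨0, a, ha⟩ : CPt N) := Or.inr ⟨rfl, N.bot_le a⟩
  induction j with
  | zero =>
    right
    rw [N.cnsmul_one]
    constructor
    · rfl
    · rw [N.pow_one_eq, N.neg_neg]
  | succ j ih =>
    rw [N.cnsmul_succ]
    rcases ih with hl | ⟨hn, haa⟩
    · left
      have h2 : N.cle (N.cadd (N.czero hzo) (N.cnsmul hzo (j + 1) ⟨0, a, ha⟩))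
          (N.cadd (⟨0, a, ha⟩ : CPt N) (N.cnsmul hzo (j + 1) ⟨0, a, ha⟩)) :=
        N.cadd_le_cadd_right _ h0g
      rw [N.czero_cadd hzo] at h2
      exact N.cle_trans hl h2
    · set w := N.cnsmul hzo (j + 1) (⟨0, a, ha⟩ : CPt N) with hw
      by_cases hcar : N.oplus (⟨0, a, ha⟩ : CPt N).a w.a = N.one
      · left
        rw [N.cadd_eq_pos hcar]
        refine Or.inr ⟨?_, ?_⟩
        · simp only [CPt.n_mk, uInt_n]
          omega
        · exact N.bot_le _
      · right
        rw [N.cadd_eq_neg hcar]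
        refine ⟨?_, ?_⟩
        · simp only [CPt.n_mk]
          omega
        · simp only [CPt.a_mk]
          rw [haa]
          show N.oplus a (N.neg (N.pow (N.neg a) (j + 1))) = _
          conv_rhs => rw [N.pow_succ_eq, N.neg_odot, N.neg_neg]

theorem phi_pos (hlin : ∀ x y : B, N.le x y ∨ N.le y x)
    (hsimp : ∀ a : B, a ≠ N.one → ∃ k, N.pow a k = N.zero) {g : CPt N}
    (h0 : N.cle (N.czero hzo) g) (hne : g ≠ N.czero hzo) : 0 < N.phi hzo g := by
  obtain ⟨gn, ga, hga⟩ := g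
  rcases h0 with hlt | ⟨he, hle⟩
  · -- 1 ≤ gn
    have h1 : (1 : ℤ) ≤ gn := by
      have : (0 : ℤ) < gn := hlt
      omega
    have h2 : N.cle (N.uInt hzo 1) ⟨gn, ga, hga⟩ := by
      rcases lt_or_eq_of_le h1 with h | h
      · exact Or.inl h
      · exact Or.inr ⟨h, N.bot_le ga⟩
    have h3 := N.le_phi hzo (p := 1) (k := 0) (by rw [N.cnsmul_one]; exact h2)
    have h4 : (0 : ℝ) < (1 : ℝ) / ((0 : ℕ) + 1) := by norm_num
    linarith
  · have hgn : gn = 0 := by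
      have h2 : (0 : ℤ) = gn := he
      omega
    subst hgn
    have hgaz : ga ≠ N.zero := by
      intro h
      exact hne (N.cpt_ext rfl h)
    obtain ⟨k, hk⟩ := hsimp (N.neg ga) (N.neg_ne_one hgaz)
    match k, hk with
    | 0, hk =>
      exact absurd (show N.one = N.zero from hk) (fun h => hzo h.symm)
    | j + 1, hk =>
      rcases N.cnsmul_pos_cases hzo hga j with hl | ⟨_, haa⟩
      · have h3 := N.le_phi hzo (p := 1) (k := j) hl
        have h4 : (0 : ℝ) < (1 : ℝ) / ((j : ℕ) + 1) := by positivity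
        linarith
      · rw [hk] at haa
        exact absurd haa (N.cnsmul hzo (j + 1) ⟨0, ga, hga⟩).ha

theorem phi_lt (hlin : ∀ x y : B, N.le x y ∨ N.le y x)
    (hsimp : ∀ a : B, a ≠ N.one → ∃ k, N.pow a k = N.zero) {x y : CPt N}
    (hxy : N.cle x y) (hne : x ≠ y) : N.phi hzo x < N.phi hzo y := by
  set d := N.cadd (N.cneg hzo x) y with hd
  have hy : N.cadd x d = y := by
    rw [hd, ← N.cadd_assoc hlin, N.cadd_cneg hzo, N.czero_cadd hzo]
  have hd0 : N.cle (N.czero hzo) d := by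
    have h2 := N.cadd_le_cadd_left (N.cneg hzo x) hxy
    rw [N.cneg_cadd hzo] at h2
    exact h2
  have hdne : d ≠ N.czero hzo := by
    intro h
    apply hne
    rw [← hy, h, N.cadd_czero hzo]
  have hpos := N.phi_pos hzo hlin hsimp hd0 hdne
  have := N.phi_cadd hzo hlin x d
  rw [hy] at this
  linarith

/-- Embedding of the MV-algebra into its Chang group unit interval. -/
noncomputable def rho (u : B) : CPt N :=
  if h : u = N.one then N.uInt hzo 1 else ⟨0, u, h⟩

theorem zero_lt_one_int : (0 : ℤ) < 1 := by omega

theorem rho_one : N.rho hzo N.one = N.uInt hzo 1 := dif_pos rfl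

theorem rho_zero : N.rho hzo N.zero = N.czero hzo := by
  unfold rho
  rw [dif_neg hzo]
  rfl

theorem rho_ne_one {u : B} (h : u ≠ N.one) : N.rho hzo u = ⟨0, u, h⟩ := dif_neg h

theorem rho_mono {u v : B} (h : N.le u v) :
    N.cle (N.rho hzo u) (N.rho hzo v) := by
  by_cases hv : v = N.one
  · subst hv
    rw [N.rho_one]
    by_cases hu : u = N.one
    · subst hu; rw [N.rho_one]; exact N.cle_refl _
    · rw [N.rho_ne_one hzo hu]
      exact Or.inl (by show (0:ℤ) < 1; omega)
  · have hu : u ≠ N.one := by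
      intro h2
      subst h2
      exact hv (N.le_antisymm (N.le_top v) h)
    rw [N.rho_ne_one hzo hu, N.rho_ne_one hzo hv]
    exact Or.inr ⟨rfl, h⟩

theorem rho_le_uone (u : B) : N.cle (N.rho hzo u) (N.uInt hzo 1) := by
  by_cases hu : u = N.one
  · subst hu; rw [N.rho_one]; exact N.cle_refl _
  · rw [N.rho_ne_one hzo hu]
    exact Or.inl (by show (0:ℤ) < 1; omega)

theorem czero_le_rho (u : B) : N.cle (N.czero hzo) (N.rho hzo u) := by
  by_cases hu : u = N.one
  · subst hu; rw [N.rho_one]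
    exact Or.inl (by show (0:ℤ) < 1; omega)
  · rw [N.rho_ne_one hzo hu]
    exact Or.inr ⟨rfl, N.bot_le u⟩

theorem rho_inj {u v : B} (h : N.rho hzo u = N.rho hzo v) : u = v := by
  by_cases hu : u = N.one <;> by_cases hv : v = N.one
  · rw [hu, hv]
  · subst hu
    rw [N.rho_one, N.rho_ne_one hzo hv] at h
    exact absurd (congrArg CPt.n h) (by rw [N.uInt_n hzo]; simp only [CPt.n_mk]; omega)
  · subst hv
    rw [N.rho_ne_one hzo hu, N.rho_one] at h
    exact absurd (congrArg CPt.n h) (by rw [N.uInt_n hzo]; simp only [CPt.n_mk]; omega)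
  · rw [N.rho_ne_one hzo hu, N.rho_ne_one hzo hv] at h
    exact congrArg CPt.a h

theorem rho_neg (u : B) :
    N.rho hzo (N.neg u) = N.cadd (N.uInt hzo 1) (N.cneg hzo (N.rho hzo u)) := by
  by_cases hu : u = N.one
  · subst hu
    rw [N.rho_one, show N.neg N.one = N.zero from N.neg_one, N.rho_zero]
    have e1 : N.cneg hzo (N.uInt hzo 1) = N.uInt hzo (-1) := by
      unfold cneg uInt
      rw [dif_pos rfl]
    rw [e1, N.cadd_uInt]
    unfold uInt czero
    exact CPt.mk_eq_mk N (by omega) rfl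
  · by_cases huz : u = N.zero
    · subst huz
      rw [N.rho_zero, show N.neg N.zero = N.one from rfl, N.rho_one]
      have e1 : N.cneg hzo (N.czero hzo) = N.uInt hzo 0 := by
        unfold cneg czero uInt
        rw [dif_pos rfl]
        exact CPt.mk_eq_mk N (by simp only [CPt.n_mk]; omega) rfl
      rw [e1, N.cadd_uInt]
      congr 1
    · have hnu : N.neg u ≠ N.one := N.neg_ne_one huz
      rw [N.rho_ne_one hzo hnu, N.rho_ne_one hzo hu]
      have e1 : N.cneg hzo (⟨0, u, hu⟩ : CPt N) = ⟨-1, N.neg u, hnu⟩ := by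
        unfold cneg
        rw [dif_neg (show (⟨0, u, hu⟩ : CPt N).a ≠ N.zero from huz)]
        exact CPt.mk_eq_mk N (by simp only [CPt.n_mk]; omega) rfl
      rw [e1]
      unfold uInt
      rw [N.cadd_mk_neg (by rw [N.zero_oplus]; exact hnu)]
      exact (CPt.mk_eq_mk N (by omega) (N.zero_oplus (N.neg u))).symm

theorem rho_oplus_carry {u v : B} (h : N.oplus u v = N.one) :
    N.cle (N.uInt hzo 1) (N.cadd (N.rho hzo u) (N.rho hzo v)) ∧
      N.rho hzo (N.oplus u v) = N.uInt hzo 1 := by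
  constructor
  · by_cases hu : u = N.one
    · subst hu
      rw [N.rho_one]
      have h2 : N.cle (N.cadd (N.uInt hzo 1) (N.czero hzo))
          (N.cadd (N.uInt hzo 1) (N.rho hzo v)) :=
        N.cadd_le_cadd_left _ (N.czero_le_rho hzo v)
      rw [N.cadd_czero hzo] at h2
      exact h2
    · by_cases hv : v = N.one
      · subst hv
        rw [N.rho_one]
        have h2 : N.cle (N.cadd (N.czero hzo) (N.uInt hzo 1))
            (N.cadd (N.rho hzo u) (N.uInt hzo 1)) :=
          N.cadd_le_cadd_right _ (N.czero_le_rho hzo u)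
        rw [N.czero_cadd hzo] at h2
        exact h2
      · rw [N.rho_ne_one hzo hu, N.rho_ne_one hzo hv, N.cadd_mk_pos h]
        refine Or.inr ⟨?_, ?_⟩
        · rw [N.uInt_n hzo]; simp only [CPt.n_mk]; omega
        · exact N.bot_le _
  · unfold rho
    rw [dif_pos h]

theorem rho_oplus_nocarry {u v : B} (h : N.oplus u v ≠ N.one) :
    N.cadd (N.rho hzo u) (N.rho hzo v) = N.rho hzo (N.oplus u v) := by
  have hu : u ≠ N.one := by
    intro h2; subst h2; exact h (N.one_oplus v)
  have hv : v ≠ N.one := by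
    intro h2; subst h2; exact h (N.oplus_one' u)
  rw [N.rho_ne_one hzo hu, N.rho_ne_one hzo hv, N.cadd_mk_neg h, N.rho_ne_one hzo h]
  exact CPt.mk_eq_mk N (by omega) rfl

end MVAlg

namespace MVAlg

variable {A : Type} (M : MVAlg A) (F : Set A)

noncomputable def embFun (hmax : IsMaximalMVFilter M F) : A → ℝ :=
  fun x =>
    (M.qMV F hmax.1).phi (M.qzero_ne_one F hmax.1 hmax.2.1)
      ((M.qMV F hmax.1).rho (M.qzero_ne_one F hmax.1 hmax.2.1) (M.qmk F hmax.1 x))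

theorem embFun_spec (hmax : IsMaximalMVFilter M F) :
    IsQuotEmbedding M F (M.embFun F hmax) := by
  have hF := hmax.1
  set N := M.qMV F hmax.1 with hN
  set hzo := M.qzero_ne_one F hmax.1 hmax.2.1 with hhzo
  have hlin : ∀ u v, N.le u v ∨ N.le v u := M.qlinear F hmax.1 hmax
  have hsimp : ∀ u, u ≠ N.one → ∃ k, N.pow u k = N.zero := M.qsimple F hmax.1 hmax
  have hval : ∀ x, M.embFun F hmax x =
      N.phi hzo (N.rho hzo (M.qmk F hmax.1 x)) := fun x => rfl
  have hzero1 : M.embFun F hmax M.zero = 0 := by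
    rw [hval, ← M.qmk_zero F hmax.1, N.rho_zero hzo, N.phi_czero hzo]
  have hrange : ∀ x, M.embFun F hmax x ∈ Set.Icc (0:ℝ) 1 := by
    intro x
    constructor
    · have h1 := N.phi_mono hzo (N.czero_le_rho hzo (M.qmk F hmax.1 x))
      rw [N.phi_czero hzo] at h1
      exact h1
    · have h1 := N.phi_mono hzo (N.rho_le_uone hzo (M.qmk F hmax.1 x))
      rw [N.phi_uone hzo] at h1
      exact h1
  have hneg1 : ∀ x, M.embFun F hmax (M.neg x) = 1 - M.embFun F hmax x := by
    intro x
    rw [hval, hval, ← M.qmk_neg F hmax.1, N.rho_neg hzo, N.phi_cadd hzo hlin,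
      N.phi_uone hzo, N.phi_cneg hzo hlin]
    ring
  have hoplus1 : ∀ x y, M.embFun F hmax (M.oplus x y) =
      min 1 (M.embFun F hmax x + M.embFun F hmax y) := by
    intro x y
    rw [hval, hval, hval, ← M.qmk_oplus F hmax.1]
    set u := M.qmk F hmax.1 x
    set v := M.qmk F hmax.1 y
    by_cases hc : N.oplus u v = N.one
    · obtain ⟨hge, heq⟩ := N.rho_oplus_carry hzo hc
      rw [hc, N.rho_one hzo, N.phi_uone hzo]
      have h1 : (1:ℝ) ≤ N.phi hzo (N.rho hzo u) + N.phi hzo (N.rho hzo v) := by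
        have h2 := N.phi_mono hzo hge
        rw [N.phi_uone hzo, N.phi_cadd hzo hlin] at h2
        exact h2
      exact (min_eq_left h1).symm
    · rw [← N.rho_oplus_nocarry hzo hc, N.phi_cadd hzo hlin]
      have h1 : N.phi hzo (N.rho hzo u) + N.phi hzo (N.rho hzo v) ≤ 1 := by
        have h2 := N.phi_mono hzo (N.rho_le_uone hzo (N.oplus u v))
        rw [N.phi_uone hzo, ← N.rho_oplus_nocarry hzo hc, N.phi_cadd hzo hlin] at h2
        exact h2
      exact (min_eq_right h1).symm
  refine ⟨⟨hrange, hzero1, hoplus1, hneg1⟩, ?_⟩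
  intro x y
  constructor
  · intro heq
    have hq : M.qmk F hmax.1 x = M.qmk F hmax.1 y := by
      by_contra hne
      rcases hlin (M.qmk F hmax.1 x) (M.qmk F hmax.1 y) with hle | hle
      · have := N.phi_lt hzo hlin hsimp (N.rho_mono hzo hle)
          (fun h => hne (N.rho_inj hzo h))
        rw [hval, hval] at heq
        linarith
      · have := N.phi_lt hzo hlin hsimp (N.rho_mono hzo hle)
          (fun h => hne ((N.rho_inj hzo h).symm))
        rw [hval, hval] at heq
        linarith
    exact (M.qmk_eq_iff F hmax.1).mp hq
  · intro hcon
    have hq : M.qmk F hmax.1 x = M.qmk F hmax.1 y := (M.qmk_eq_iff F hmax.1).mpr hcon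
    rw [hval, hval, hq]

section Converse

theorem f_one_eq {f : A → ℝ} (hf : IsMVHomToI M f) : f M.one = 1 := by
  rw [show M.one = M.neg M.zero from rfl, hf.2.2.2, hf.2.1]
  norm_num

theorem f_odot_eq {f : A → ℝ} (hf : IsMVHomToI M f) (x y : A) :
    f (M.odot x y) = max 0 (f x + f y - 1) := by
  rw [show M.odot x y = M.neg (M.oplus (M.neg x) (M.neg y)) from rfl,
    hf.2.2.2, hf.2.2.1, hf.2.2.2, hf.2.2.2]
  rcases le_total (f x + f y) 1 with h | h
  · rw [min_eq_left (by linarith : (1:ℝ) ≤ 1 - f x + (1 - f y)),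
      max_eq_left (by linarith : f x + f y - 1 ≤ (0:ℝ))]
    ring
  · rw [min_eq_right (by linarith : 1 - f x + (1 - f y) ≤ (1:ℝ)),
      max_eq_right (by linarith : (0:ℝ) ≤ f x + f y - 1)]
    ring

theorem mem_iff_f_one {F : Set A} (hF : IsMVFilter M F) {f : A → ℝ}
    (hf : IsQuotEmbedding M F f) (x : A) : x ∈ F ↔ f x = 1 := by
  constructor
  · intro hx
    have h1 : M.imp x M.one ∈ F := by
      rw [show M.imp x M.one = M.one from M.le_top x]
      exact M.one_mem F hF
    have h2 : M.imp M.one x ∈ F := by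
      rw [M.imp_one_left]
      exact hx
    have := (hf.2 x M.one).mpr ⟨h1, h2⟩
    rw [this, M.f_one_eq hf.1]
  · intro hx
    have : f x = f M.one := by rw [hx, M.f_one_eq hf.1]
    have h2 := ((hf.2 x M.one).mp this).2
    rw [M.imp_one_left] at h2
    exact h2

theorem exists_pow_f_zero {F : Set A} {f : A → ℝ} (hf : IsQuotEmbedding M F f)
    {x : A} (hx : f x < 1) : ∃ k, f (M.pow x k) = 0 := by
  have hb := hf.1.1
  have key : ∀ k : ℕ, f (M.pow x k) ≤ 1 - k * (1 - f x) ∨ f (M.pow x k) = 0 := by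
    intro k
    induction k with
    | zero =>
      left
      rw [M.pow_zero_eq, M.f_one_eq hf.1]
      push_cast
      linarith
    | succ k ih =>
      have e1 : f (M.pow x (k + 1)) = max 0 (f x + f (M.pow x k) - 1) := by
        rw [M.pow_succ_eq]
        exact M.f_odot_eq hf.1 x (M.pow x k)
      rcases ih with ih | ih
      · rcases le_or_gt 0 (1 - ((k:ℝ) + 1) * (1 - f x)) with hpos | hneg
        · left
          rw [e1]
          push_cast
          apply max_le hpos
          linarith
        · right
          rw [e1]
          apply max_eq_left
          linarith
      · right
        rw [e1, ih]
        apply max_eq_left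
        have := (hb x).2
        linarith
  obtain ⟨k, hk⟩ := exists_nat_gt (1 / (1 - f x))
  have hfx : 0 < 1 - f x := by linarith
  have hk2 : 1 < k * (1 - f x) := by
    rw [div_lt_iff₀ hfx] at hk
    linarith
  rcases key k with h | h
  · refine ⟨k, _root_.le_antisymm ?_ (hb _).1⟩
    linarith
  · exact ⟨k, h⟩

theorem maximal_of_embedding (hF : IsMVFilter M F) (f : A → ℝ)
    (hf : IsQuotEmbedding M F f) : IsMaximalMVFilter M F := by
  refine ⟨hF, ?_, ?_⟩
  · intro hU
    have h0 : M.zero ∈ F := by rw [hU]; trivial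
    have := (M.mem_iff_f_one hF hf M.zero).mp h0
    rw [hf.1.2.1] at this
    norm_num at this
  · intro G hG hGproper hFG
    apply Set.Subset.antisymm _ hFG
    intro z hzG
    by_contra hzF
    have hz1 : f z < 1 := by
      rcases lt_or_eq_of_le (hf.1.1 z).2 with h | h
      · exact h
      · exact absurd ((M.mem_iff_f_one hF hf z).mpr h) hzF
    obtain ⟨k, hk⟩ := M.exists_pow_f_zero hf hz1
    have hzero : f (M.pow z k) = f M.zero := by rw [hk, hf.1.2.1]
    have himp := ((hf.2 (M.pow z k) M.zero).mp hzero).1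
    have hpowG : M.pow z k ∈ G := by
      clear hk hzero himp
      induction k with
      | zero => exact M.one_mem G hG
      | succ k ih =>
        rw [M.pow_succ_eq]
        exact M.odot_mem G hG hzG ih
    have hzeroG : M.zero ∈ G := M.mp_mem G hG hpowG (hFG himp)
    exact hGproper (M.univ_of_zero_mem G hG hzeroG)

end Converse

end MVAlg

namespace MVAlg

theorem rmm_odd (X : ℝ) :
    max 0 ((min 1 (max 0 X)) + (min 1 (max 0 X)) - 1) = min 1 (max 0 (2 * X - 1)) := by
  rcases le_total X 0 with h | h <;> rcases le_total 1 X with h' | h' <;>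
    simp [min_def, max_def] <;> split_ifs <;> linarith

theorem rmm_even (X : ℝ) :
    min 1 ((min 1 (max 0 X)) + (min 1 (max 0 X))) = min 1 (max 0 (2 * X)) := by
  rcases le_total X 0 with h | h <;> rcases le_total 1 X with h' | h' <;>
    simp [min_def, max_def] <;> split_ifs <;> linarith

variable {A : Type}

/-- Dyadic threshold terms. -/
def wterm (M : MVAlg A) : ℕ → ℕ → A → A
  | 0, _, x => x
  | n + 1, j, x =>
    if j % 2 = 1 then M.odot (wterm M n (j / 2) x) (wterm M n (j / 2) x)
    else M.oplus (wterm M n (j / 2) x) (wterm M n (j / 2) x)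

theorem wterm_zero (M : MVAlg A) (j : ℕ) (x : A) : M.wterm 0 j x = x := rfl

theorem wterm_succ (M : MVAlg A) (n j : ℕ) (x : A) :
    M.wterm (n + 1) j x =
      if j % 2 = 1 then M.odot (M.wterm n (j / 2) x) (M.wterm n (j / 2) x)
      else M.oplus (M.wterm n (j / 2) x) (M.wterm n (j / 2) x) := rfl

variable (M : MVAlg A)

theorem wterm_val {f : A → ℝ} (hf : IsMVHomToI M f) (x : A) :
    ∀ n j : ℕ, j < 2 ^ n →
      f (M.wterm n j x) = min 1 (max 0 ((2:ℝ) ^ n * f x - (j:ℝ))) := by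
  intro n
  induction n with
  | zero =>
    intro j hj
    have hj0 : j = 0 := by omega
    subst hj0
    rw [M.wterm_zero]
    have e : (2:ℝ) ^ 0 * f x - ((0:ℕ):ℝ) = f x := by norm_num
    rw [e, max_eq_right (hf.1 x).1, min_eq_right (hf.1 x).2]
  | succ n ih =>
    intro j hj
    have hj2 : j / 2 < 2 ^ n := by
      have h2 : 2 ^ (n + 1) = 2 * 2 ^ n := by ring
      omega
    have hv := ih (j / 2) hj2
    by_cases hb : j % 2 = 1
    · rw [M.wterm_succ, if_pos hb, M.f_odot_eq hf, hv]
      have hj1 : j = 2 * (j / 2) + 1 := by omega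
      have ej : (j:ℝ) = 2 * ((j / 2 : ℕ):ℝ) + 1 := by
        calc (j:ℝ) = ((2 * (j / 2) + 1 : ℕ):ℝ) := by rw [← hj1]
          _ = 2 * ((j / 2 : ℕ):ℝ) + 1 := by push_cast; ring
      have etarg : (2:ℝ) ^ (n + 1) * f x - (j:ℝ) =
          2 * ((2:ℝ) ^ n * f x - ((j / 2 : ℕ):ℝ)) - 1 := by
        rw [ej, pow_succ]
        ring
      rw [etarg]
      exact rmm_odd _
    · rw [M.wterm_succ, if_neg hb, hf.2.2.1, hv]
      have hj1 : j = 2 * (j / 2) := by omega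
      have ej : (j:ℝ) = 2 * ((j / 2 : ℕ):ℝ) := by
        calc (j:ℝ) = ((2 * (j / 2) : ℕ):ℝ) := by rw [← hj1]
          _ = 2 * ((j / 2 : ℕ):ℝ) := by push_cast; ring
      have etarg : (2:ℝ) ^ (n + 1) * f x - (j:ℝ) =
          2 * ((2:ℝ) ^ n * f x - ((j / 2 : ℕ):ℝ)) := by
        rw [ej, pow_succ]
        ring
      rw [etarg]
      exact rmm_even _

theorem emb_unique_lt {F : Set A} (hF : IsMVFilter M F) {f g : A → ℝ}
    (hf : IsQuotEmbedding M F f) (hg : IsQuotEmbedding M F g) {x : A}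
    (hlt : f x < g x) : False := by
  have hd : 0 < g x - f x := by linarith
  obtain ⟨n, hn⟩ := pow_unbounded_of_one_lt (2 / (g x - f x)) (by norm_num : (1:ℝ) < 2)
  have h2n : (2:ℝ) < 2 ^ n * (g x - f x) := by
    rw [div_lt_iff₀ hd] at hn
    linarith
  set m : ℤ := ⌊(2:ℝ) ^ n * g x⌋ with hm
  have hfl1 : (m:ℝ) ≤ 2 ^ n * g x := Int.floor_le _
  have hfl2 : (2:ℝ) ^ n * g x < m + 1 := Int.lt_floor_add_one _
  have hgx1 : g x ≤ 1 := (hg.1.1 x).2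
  have hfx0 : 0 ≤ f x := (hf.1.1 x).1
  have hpow0 : (0:ℝ) < 2 ^ n := by positivity
  have hm2 : 2 ^ n * f x + 1 < (m:ℝ) := by linarith
  have hm0 : 2 ≤ m := by
    have h1 : (1:ℝ) < (m:ℝ) := by nlinarith
    have h2 : (1:ℤ) < m := by exact_mod_cast h1
    omega
  have hmle : m ≤ ((2 ^ n : ℕ) : ℤ) := by
    have h1 : (m:ℝ) ≤ ((2 ^ n : ℕ):ℝ) := by
      push_cast
      nlinarith
    exact_mod_cast h1
  set j : ℕ := (m - 1).toNat with hj
  have hjZ : (j : ℤ) = m - 1 := Int.toNat_of_nonneg (by omega)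
  have hjr : ((j:ℕ):ℝ) = (m:ℝ) - 1 := by exact_mod_cast hjZ
  have hjlt : j < 2 ^ n := by omega
  have hfval := M.wterm_val hf.1 x n j hjlt
  have hgval := M.wterm_val hg.1 x n j hjlt
  have hg1 : g (M.wterm n j x) = 1 := by
    rw [hgval, hjr]
    rw [max_eq_right (by linarith : (0:ℝ) ≤ 2 ^ n * g x - ((m:ℝ) - 1)),
      min_eq_left (by linarith : (1:ℝ) ≤ 2 ^ n * g x - ((m:ℝ) - 1))]
  have hf1 : f (M.wterm n j x) < 1 := by
    rw [hfval, hjr]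
    rcases le_total ((2:ℝ) ^ n * f x - ((m:ℝ) - 1)) 0 with h | h
    · rw [max_eq_left h]
      norm_num
    · rw [max_eq_right h, min_eq_right (by linarith)]
      linarith
  have e1 : g (M.wterm n j x) = g M.one := by rw [hg1, M.f_one_eq hg.1]
  have hcon := (hg.2 _ _).mp e1
  have e2 := (hf.2 (M.wterm n j x) M.one).mpr hcon
  rw [M.f_one_eq hf.1] at e2
  linarith

theorem emb_unique {F : Set A} (hF : IsMVFilter M F) (f g : A → ℝ)
    (hf : IsQuotEmbedding M F f) (hg : IsQuotEmbedding M F g) : f = g := by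
  funext x
  rcases lt_trichotomy (f x) (g x) with h | h | h
  · exact (M.emb_unique_lt hF hf hg h).elim
  · exact h
  · exact (M.emb_unique_lt hF hg hf h).elim

end MVAlg



/-- A filter `F` of an MV-algebra `A` is maximal iff the quotient `A/F` embeds
into the MV-algebra `[0,1]`, and in that case the embedding is unique. -/
theorem maximal_iff_embeds_in_unit_interval {A : Type} (M : MVAlg A)
    (F : Set A) (hF : IsMVFilter M F) :
    (IsMaximalMVFilter M F ↔ ∃ f : A → ℝ, IsQuotEmbedding M F f) ∧
    (IsMaximalMVFilter M F →
      ∀ f g : A → ℝ, IsQuotEmbedding M F f → IsQuotEmbedding M F g → f = g) := by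
  constructor
  · constructor
    · intro hmax
      exact ⟨M.embFun F hmax, M.embFun_spec F hmax⟩
    · rintro ⟨f, hf⟩
      exact M.maximal_of_embedding F hF f hf
  · intro _ f g hf hg
    exact M.emb_unique hF f g hf hg
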